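/- arXiv:2406.20032 — 2 statements merged into one kernel-verified Lean document; each statement's English description precedes it below -/
import Mathlib

section
/- The graceful chromatic number of the complete graph K_11 is 26; a graceful 26-coloring is given by assigning the eleven vertices the colors 1, 2, 5, 7, 11, 16, 18, 19, 23, 24, 26. -/
/-- The induced edge coloring `g*(ab) = |g a - g b|` is proper: any two edges sharing a
vertex receive distinct values. -/
def GracefulEdgeProper {V : Type*} (G : SimpleGraph V) (g : V → ℕ) : Prop :=
  ∀ a b c : V, G.Adj a b → G.Adj a c → b ≠ c →
    Nat.dist (g a) (g b) ≠ Nat.dist (g a) (g c)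

/-- A graceful coloring: a proper vertex coloring by positive integers whose induced
edge coloring is proper. -/
def IsGracefulColoring {V : Type*} (G : SimpleGraph V) (g : V → ℕ) : Prop :=
  (∀ v, 1 ≤ g v) ∧ (∀ a b : V, G.Adj a b → g a ≠ g b) ∧ GracefulEdgeProper G g

/-- A graceful `l`-coloring: a proper vertex coloring with colors in `{1, …, l}` whose
induced edge coloring is proper. -/
def IsGracefulLColoring {V : Type*} (G : SimpleGraph V) (l : ℕ) (g : V → ℕ) : Prop :=
  (∀ v, g v ∈ Finset.Icc 1 l) ∧ (∀ a b : V, G.Adj a b → g a ≠ g b) ∧ GracefulEdgeProper G g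

/-- The graceful chromatic number: the least `l ≥ 2` admitting a graceful `l`-coloring. -/
noncomputable def gracefulChromaticNumber {V : Type*} (G : SimpleGraph V) : ℕ :=
  sInf {l | 2 ≤ l ∧ ∃ g : V → ℕ, IsGracefulLColoring G l g}

/-- A finite set of naturals is 3-AP-free: no three distinct elements `a, b, c`
with `b - a = c - b`. -/
def ThreeAPFreeSet (S : Finset ℕ) : Prop :=
  ∀ a ∈ S, ∀ b ∈ S, ∀ c ∈ S, a ≠ b → b ≠ c → a ≠ c → (b : ℤ) - (a : ℤ) ≠ (c : ℤ) - (b : ℤ)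

/-! ### Auxiliary DFS search for 3-AP-free sets in `[1, 25]` -/

def okC (c : ℕ) (l : List ℕ) : Bool :=
  l.all (fun b => l.all (fun a => decide (a + c ≠ 2 * b)))

def search : ℕ → ℕ → ℕ → List ℕ → Bool
  | 0, _, _, _ => true
  | _ + 1, 0, _, _ => false
  | k + 1, f + 1, c, l =>
      if k ≤ f then
        (okC c l && search k f (c + 1) (c :: l)) || search (k + 1) f (c + 1) l
      else false

/-- No 3-term AP in a (decreasing) list: head is the largest, check it against pairs below. -/
def NoAP : List ℕ → Prop
  | [] => True
  | c :: l => (∀ a ∈ l, ∀ b ∈ l, a + c ≠ 2 * b) ∧ NoAP l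

lemma NoAP_suffix : ∀ (x y : List ℕ), NoAP (x ++ y) → NoAP y
  | [], _, h => h
  | _ :: x, y, h => NoAP_suffix x y h.2

lemma okC_true_of {c : ℕ} {l : List ℕ} (h : ∀ a ∈ l, ∀ b ∈ l, a + c ≠ 2 * b) :
    okC c l = true := by
  simp only [okC, List.all_eq_true, decide_eq_true_iff]
  exact fun b hb a ha => h a ha b hb

lemma sorted_length_le : ∀ (r : List ℕ) (lo hi : ℕ), r.Pairwise (· < ·) →
    (∀ x ∈ r, lo ≤ x ∧ x ≤ hi) → r.length ≤ hi + 1 - lo := by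
  intro r
  induction r with
  | nil => intro lo hi _ _; simp
  | cons x t ih =>
    intro lo hi hs hb
    have h1 : t.length ≤ hi + 1 - (x + 1) := by
      apply ih (x + 1) hi hs.of_cons
      intro y hy
      have := (List.pairwise_cons.mp hs).1 y hy
      have := hb y (by simp [hy])
      omega
    have h2 := hb x (by simp)
    simp only [List.length_cons]
    omega

lemma search_complete : ∀ (f k c : ℕ) (r l : List ℕ), r.length = k → c + f = 26 →
    (∀ x ∈ r, c ≤ x ∧ x ≤ 25) → r.Pairwise (· < ·) → NoAP (r.reverse ++ l) →
    search k f c l = true := by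
  intro f
  induction f with
  | zero =>
    intro k c r l hlen hcf hbd _ _
    match r, hlen with
    | [], rfl => rfl
    | x :: t, _ =>
      have := hbd x (by simp)
      omega
  | succ f ih =>
    intro k c r l hlen hcf hbd hsort hnoap
    match r, hlen with
    | [], rfl => rfl
    | x :: t, rfl =>
      have hkf : t.length ≤ f := by
        have := sorted_length_le (x :: t) c 25 hsort hbd
        simp only [List.length_cons] at this
        omega
      show (if t.length ≤ f then
          (okC c l && search t.length f (c + 1) (c :: l)) ||
            search (t.length + 1) f (c + 1) l
        else false) = true
      rw [if_pos hkf]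
      rcases eq_or_lt_of_le (hbd x (by simp)).1 with hx | hx
      · -- x = c : take it
        subst hx
        have hrw : (c :: t).reverse ++ l = t.reverse ++ (c :: l) := by
          simp [List.reverse_cons, List.append_assoc]
        rw [hrw] at hnoap
        have hok : okC c l = true := by
          have := (NoAP_suffix _ _ hnoap : NoAP (c :: l))
          exact okC_true_of this.1
        have hrec : search t.length f (c + 1) (c :: l) = true := by
          apply ih _ _ t (c :: l) rfl (by omega) _ hsort.of_cons hnoap
          intro y hy
          have h1 := hbd y (by simp [hy])
          have h2 := (List.pairwise_cons.mp hsort).1 y hy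
          omega
        rw [hok, hrec]
        rfl
      · -- x > c : skip c
        have hrec : search (t.length + 1) f (c + 1) l = true := by
          apply ih _ _ (x :: t) l rfl (by omega) _ hsort hnoap
          intro y hy
          rcases List.mem_cons.mp hy with rfl | hy
          · exact ⟨hx, (hbd y (by simp)).2⟩
          · have h1 := hbd y (by simp [hy])
            have h2 := (List.pairwise_cons.mp hsort).1 y hy
            omega
        rw [hrec, Bool.or_true]

lemma noAP_of (L : List ℕ) (hs : L.Pairwise (· > ·))
    (H : ∀ a ∈ L, ∀ b ∈ L, ∀ x ∈ L, a < b → b < x → a + x ≠ 2 * b) : NoAP L := by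
  induction L with
  | nil => trivial
  | cons c t ih =>
    rcases List.pairwise_cons.mp hs with ⟨hc, ht⟩
    constructor
    · intro a ha b hb heq
      have hca := hc a ha
      have hcb := hc b hb
      rcases lt_trichotomy a b with h | h | h
      · exact H a (by simp [ha]) b (by simp [hb]) c (by simp) h hcb heq
      · omega
      · omega
    · exact ih ht (fun a ha b hb x hx => H a (by simp [ha]) b (by simp [hb]) x (by simp [hx]))

set_option maxHeartbeats 1600000 in
lemma search_false : search 10 24 2 [1] = false := by decide

theorem gracefulChromatic_K11 :
    gracefulChromaticNumber (⊤ : SimpleGraph (Fin 11)) = 26 ∧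
      IsGracefulLColoring (⊤ : SimpleGraph (Fin 11)) 26 ![1, 2, 5, 7, 11, 16, 18, 19, 23, 24, 26] := by
  have hcol : IsGracefulLColoring (⊤ : SimpleGraph (Fin 11)) 26
      ![1, 2, 5, 7, 11, 16, 18, 19, 23, 24, 26] := by
    refine ⟨by decide, ?_, ?_⟩
    · intro a b hab
      simp only [SimpleGraph.top_adj] at hab
      revert hab
      revert a b
      decide
    · intro a b c hab hac hbc
      simp only [SimpleGraph.top_adj] at hab hac
      revert hab hac hbc
      revert a b c
      decide
  have hmem : 26 ∈ {l | 2 ≤ l ∧ ∃ g : Fin 11 → ℕ,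
      IsGracefulLColoring (⊤ : SimpleGraph (Fin 11)) l g} :=
    ⟨by norm_num, _, hcol⟩
  have hlow : ∀ l ∈ {l | 2 ≤ l ∧ ∃ g : Fin 11 → ℕ,
      IsGracefulLColoring (⊤ : SimpleGraph (Fin 11)) l g}, 26 ≤ l := by
    rintro l ⟨-, g, hg1, hg2, hg3⟩
    by_contra hcon
    push_neg at hcon
    have hl25 : l ≤ 25 := by omega
    have hinj : Function.Injective g := by
      intro a b hab
      by_contra hne
      exact hg2 a b ((SimpleGraph.top_adj _ _).mpr hne) hab
    set s : Finset ℕ := Finset.image g Finset.univ with hs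
    have hcard : s.card = 11 := by
      rw [hs, Finset.card_image_of_injective _ hinj, Finset.card_univ, Fintype.card_fin]
    have hne : s.Nonempty := by
      rw [← Finset.card_pos, hcard]; norm_num
    have hbd : ∀ x ∈ s, 1 ≤ x ∧ x ≤ 25 := by
      intro x hx
      rcases Finset.mem_image.mp hx with ⟨v, -, rfl⟩
      have := Finset.mem_Icc.mp (hg1 v)
      omega
    have hH : ∀ a ∈ s, ∀ b ∈ s, ∀ x ∈ s, a < b → b < x → a + x ≠ 2 * b := by
      intro a ha b hb x hx hab hbx heq
      rcases Finset.mem_image.mp ha with ⟨u, -, rfl⟩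
      rcases Finset.mem_image.mp hb with ⟨v, -, rfl⟩
      rcases Finset.mem_image.mp hx with ⟨w, -, rfl⟩
      have hvu : v ≠ u := fun h => by subst h; omega
      have hvw : v ≠ w := fun h => by subst h; omega
      have huw : u ≠ w := fun h => by subst h; omega
      have := hg3 v u w ((SimpleGraph.top_adj _ _).mpr hvu)
        ((SimpleGraph.top_adj _ _).mpr hvw) huw
      apply this
      simp only [Nat.dist]
      omega
    -- Shift the set so that its minimum becomes 1.
    set d : ℕ := s.min' hne - 1 with hd
    have hdle : ∀ x ∈ s, d + 1 ≤ x := by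
      intro x hx
      have h1 := s.min'_le x hx
      have h2 := (hbd _ (s.min'_mem hne)).1
      omega
    set t : Finset ℕ := s.image (fun x => x - d) with ht
    have htmem : ∀ y, y ∈ t ↔ ∃ x ∈ s, x - d = y := by
      intro y; rw [ht, Finset.mem_image]
    have htcard : t.card = 11 := by
      rw [ht, Finset.card_image_of_injOn, hcard]
      intro x hx y hy hxy
      simp only at hxy
      have := hdle x hx
      have := hdle y hy
      omega
    have htbd : ∀ y ∈ t, 1 ≤ y ∧ y ≤ 25 := by
      intro y hy
      rcases (htmem y).mp hy with ⟨x, hx, rfl⟩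
      have := hdle x hx
      have := hbd x hx
      omega
    have h1t : 1 ∈ t := by
      rw [htmem]
      have h2 := (hbd _ (s.min'_mem hne)).1
      exact ⟨s.min' hne, s.min'_mem hne, by omega⟩
    have htH : ∀ a ∈ t, ∀ b ∈ t, ∀ x ∈ t, a < b → b < x → a + x ≠ 2 * b := by
      intro a ha b hb x hx hab hbx heq
      rcases (htmem a).mp ha with ⟨a', ha', rfl⟩
      rcases (htmem b).mp hb with ⟨b', hb', rfl⟩
      rcases (htmem x).mp hx with ⟨x', hx', rfl⟩
      have h1 := hdle a' ha'
      have h2 := hdle b' hb'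
      have h3 := hdle x' hx'
      exact hH a' ha' b' hb' x' hx' (by omega) (by omega) (by omega)
    set m : List ℕ := t.sort (· ≤ ·) with hm
    have hmlen : m.length = 11 := by rw [hm, Finset.length_sort, htcard]
    have hmsort : m.Pairwise (· < ·) := by rw [hm]; exact List.sortedLT_iff_pairwise.mp (Finset.sortedLT_sort t)
    have hmmem : ∀ x, x ∈ m ↔ x ∈ t := fun x => by rw [hm]; exact Finset.mem_sort _
    -- the head of m is 1
    obtain ⟨r, hr⟩ : ∃ r, m = 1 :: r := by
      match m, hmlen with
      | h :: r, _ =>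
        refine ⟨r, ?_⟩
        have h1m : (1 : ℕ) ∈ h :: r := (hmmem 1).mpr h1t
        rcases List.mem_cons.mp h1m with h1 | h1
        · rw [← h1]
        · have := (List.pairwise_cons.mp hmsort).1 1 h1
          have := (htbd h ((hmmem h).mp (by simp))).1
          omega
    have hrsort : r.Pairwise (· < ·) := by
      rw [hr] at hmsort; exact hmsort.of_cons
    have hrbd : ∀ x ∈ r, 2 ≤ x ∧ x ≤ 25 := by
      intro x hx
      rw [hr] at hmsort hmmem
      have := (List.pairwise_cons.mp hmsort).1 x hx
      have := htbd x ((hmmem x).mp (by simp [hx]))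
      omega
    have hrlen : r.length = 10 := by
      rw [hr] at hmlen; simpa using hmlen
    have hnoap : NoAP (r.reverse ++ [1]) := by
      have : r.reverse ++ [1] = m.reverse := by rw [hr]; simp
      rw [this]
      apply noAP_of
      · rw [List.pairwise_reverse]; exact hmsort
      · intro a ha b hb x hx
        rw [List.mem_reverse, hmmem] at ha hb hx
        exact htH a ha b hb x hx
    have := search_complete 24 10 2 r [1] hrlen (by norm_num) hrbd hrsort hnoap
    rw [search_false] at this
    exact absurd this (by simp)
  refine ⟨le_antisymm (Nat.sInf_le hmem) (le_csInf ⟨26, hmem⟩ hlow), hcol⟩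
end

section
/- The graceful chromatic number of the complete graph K_14 is 36; a graceful 36-coloring is given by assigning the fourteen vertices the colors 1, 2, 4, 8, 9, 13, 21, 23, 26, 27, 30, 32, 35, 36. -/
set_option maxRecDepth 100000

/-- `y` would create a 3-AP together with two elements of `s`. -/
def BadAP (y : ℕ) (s : List ℕ) : Prop :=
  ∃ a ∈ s, ∃ b ∈ s, a + y = 2 * b ∨ (a ≠ b ∧ a + b = 2 * y)

instance (y : ℕ) (s : List ℕ) : Decidable (BadAP y s) := by
  unfold BadAP; infer_instance

/-- No 3-term AP among distinct elements. -/
def APF (S : Finset ℕ) : Prop :=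
  ∀ a ∈ S, ∀ b ∈ S, ∀ c ∈ S, a ≠ b → b ≠ c → a ≠ c → a + c ≠ 2 * b

def apBits (x a : ℕ) : ℕ :=
  (if a ≤ 2 * x then 2 ^ (2 * x - a) else 0) |||
  (if x ≤ 2 * a then 2 ^ (2 * a - x) else 0) |||
  (if (a + x) % 2 = 0 then 2 ^ ((a + x) / 2) else 0)

def updForb (x : ℕ) (s : List ℕ) (forb : ℕ) : ℕ :=
  s.foldr (fun a f => f ||| apBits x a) (forb ||| 2 ^ x)

def searchAP : ℕ → ℕ → List ℕ → ℕ → List ℕ → Bool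
  | 0, _, _, _, _ => false
  | _ + 1, 0, _, _, _ => false
  | fuel + 1, need + 1, s, forb, free =>
    if free.length < need + 1 then true
    else match free with
      | [] => true
      | x :: rest =>
        if forb.testBit x then searchAP fuel (need + 1) s forb rest
        else
          (let nf := updForb x s forb
           searchAP fuel need (x :: s) nf (rest.filter (fun y => !(nf.testBit y)))) &&
          searchAP fuel (need + 1) s forb rest

/-- `Good need s free`: any finset `T` inside `free`, disjoint from `s`, such that
`T ∪ s` is AP-free, has fewer than `need` elements. -/
def Good (need : ℕ) (s : List ℕ) (free : List ℕ) : Prop :=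
  ∀ T : Finset ℕ, (∀ y ∈ T, y ∈ free) → (∀ y ∈ T, y ∉ s) →
    APF (T ∪ s.toFinset) → T.card < need

lemma badAP_mono {y : ℕ} {s t : List ℕ} (h : s ⊆ t) : BadAP y s → BadAP y t := by
  rintro ⟨a, ha, b, hb, hp⟩; exact ⟨a, h ha, b, h hb, hp⟩

lemma apf_mono {S T : Finset ℕ} (h : S ⊆ T) : APF T → APF S := by
  intro hT a ha b hb c hc h1 h2 h3
  exact hT a (h ha) b (h hb) c (h hc) h1 h2 h3

lemma badAP_elim {y : ℕ} {s : List ℕ} {U : Finset ℕ} (hAPF : APF U) (hy : y ∈ U)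
    (hs : ∀ a ∈ s, a ∈ U) (hys : y ∉ s) : ¬ BadAP y s := by
  rintro ⟨a, ha, b, hb, hp | ⟨hab, hp⟩⟩
  · have hay : a ≠ y := by rintro rfl; exact hys ha
    have hby : b ≠ y := by rintro rfl; exact hys hb
    have hab : a ≠ b := by
      rintro rfl
      have : y = a := by omega
      exact hys (this ▸ ha)
    exact hAPF a (hs a ha) b (hs b hb) y hy hab hby hay hp
  · have hay : a ≠ y := by rintro rfl; exact hys ha
    have hby : y ≠ b := by rintro rfl; exact hys hb
    exact hAPF a (hs a ha) y hy b (hs b hb) hay hby hab hp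

lemma testBit_updForb (x : ℕ) (s : List ℕ) (forb y : ℕ)
    (h : (updForb x s forb).testBit y = true) :
    forb.testBit y = true ∨ BadAP y (x :: s) := by
  induction s with
  | nil =>
    simp only [updForb, List.foldr_nil, Nat.testBit_or] at h
    rcases Bool.or_eq_true_iff.mp h with h | h
    · exact Or.inl h
    · rw [Nat.testBit_two_pow] at h
      have : x = y := of_decide_eq_true h
      subst this
      exact Or.inr ⟨x, List.mem_cons_self, x, List.mem_cons_self, Or.inl (by ring)⟩
  | cons a s ih =>
    simp only [updForb, List.foldr_cons, Nat.testBit_or] at h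
    rcases Bool.or_eq_true_iff.mp h with h | h
    · rcases ih h with h | h
      · exact Or.inl h
      · refine Or.inr (badAP_mono ?_ h)
        intro z hz
        rcases List.mem_cons.mp hz with rfl | hz
        · exact List.mem_cons_self
        · exact List.mem_cons_of_mem _ (List.mem_cons_of_mem _ hz)
    · have hxmem : x ∈ x :: a :: s := List.mem_cons_self
      have hamem : a ∈ x :: a :: s := List.mem_cons_of_mem _ (List.mem_cons_self)
      simp only [apBits, Nat.testBit_or] at h
      rcases Bool.or_eq_true_iff.mp h with h | h
      · rcases Bool.or_eq_true_iff.mp h with h | h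
        · split at h
          · rw [Nat.testBit_two_pow] at h
            have hy : 2 * x - a = y := of_decide_eq_true h
            exact Or.inr ⟨a, hamem, x, hxmem, Or.inl (by omega)⟩
          · simp at h
        · split at h
          · rw [Nat.testBit_two_pow] at h
            have hy : 2 * a - x = y := of_decide_eq_true h
            exact Or.inr ⟨x, hxmem, a, hamem, Or.inl (by omega)⟩
          · simp at h
      · split at h
        · rw [Nat.testBit_two_pow] at h
          have hy : (a + x) / 2 = y := of_decide_eq_true h
          by_cases hax : a = x
          · exact Or.inr ⟨x, hxmem, x, hxmem, Or.inl (by omega)⟩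
          · exact Or.inr ⟨a, hamem, x, hxmem, Or.inr ⟨hax, by omega⟩⟩
        · simp at h

lemma inv0 : ∀ y, (0 : ℕ).testBit y = true → BadAP y ([] : List ℕ) := by
  simp [Nat.zero_testBit]

lemma inv_step {forb : ℕ} {s : List ℕ}
    (h : ∀ y, forb.testBit y = true → BadAP y s) (x : ℕ) :
    ∀ y, (updForb x s forb).testBit y = true → BadAP y (x :: s) := fun y hy =>
  (testBit_updForb x s forb y hy).elim
    (fun h' => badAP_mono (List.subset_cons_self _ _) (h y h')) id

lemma mem_range'_iff {m s n : ℕ} : m ∈ List.range' s n ↔ s ≤ m ∧ m < s + n := by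
  rw [List.mem_range']
  constructor
  · rintro ⟨i, hi, rfl⟩; omega
  · intro h; exact ⟨m - s, by omega, by omega⟩

lemma sound : ∀ (fuel need : ℕ) (s : List ℕ) (forb : ℕ) (free : List ℕ),
    searchAP fuel need s forb free = true →
    (∀ y, forb.testBit y = true → BadAP y s) →
    Good need s free := by
  intro fuel
  induction fuel with
  | zero => intro need s forb free h; simp [searchAP] at h
  | succ fuel ih =>
    intro need s forb free h hinv T hTfree hTs hAPF
    match need with
    | 0 => simp [searchAP] at h
    | need + 1 =>
      have hsU : ∀ a ∈ s, a ∈ T ∪ s.toFinset := fun a ha =>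
        Finset.mem_union_right _ (List.mem_toFinset.mpr ha)
      by_cases hlen : free.length < need + 1
      · -- prune case: T ⊆ free so card ≤ length
        have hsub : T ⊆ free.toFinset := fun y hy => List.mem_toFinset.mpr (hTfree y hy)
        have := Finset.card_le_card hsub
        have := List.toFinset_card_le free
        omega
      · match free with
        | [] => simp at hlen
        | x :: rest =>
          rw [searchAP, if_neg hlen] at h
          have hTU : ∀ y ∈ T, y ∈ T ∪ s.toFinset := fun y hy => Finset.mem_union_left _ hy
          by_cases hxT : x ∈ T
          · -- x was picked
            have hxbad : ¬ BadAP x s :=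
              badAP_elim hAPF (hTU x hxT) hsU (hTs x hxT)
            have hbit : forb.testBit x = false := by
              cases hb : forb.testBit x
              · rfl
              · exact absurd (hinv x hb) hxbad
            rw [hbit] at h
            simp only [Bool.false_eq_true, if_false, Bool.and_eq_true] at h
            obtain ⟨h1, _⟩ := h
            set nf := updForb x s forb with hnf
            have hinv' : ∀ y, nf.testBit y = true → BadAP y (x :: s) := inv_step hinv x
            have hUsub : T.erase x ∪ (x :: s).toFinset ⊆ T ∪ s.toFinset := by
              intro y hy
              simp only [Finset.mem_union, Finset.mem_erase, List.toFinset_cons,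
                Finset.mem_insert, List.mem_toFinset] at hy ⊢
              rcases hy with ⟨_, hy⟩ | rfl | hy
              · exact Or.inl hy
              · exact Or.inl hxT
              · exact Or.inr hy
            have hAPF' : APF (T.erase x ∪ (x :: s).toFinset) := apf_mono hUsub hAPF
            have hcard : (T.erase x).card < need := by
              refine ih need (x :: s) nf _ h1 hinv' (T.erase x) ?_ ?_ hAPF'
              · intro y hy
                have hyT := Finset.mem_of_mem_erase hy
                have hyx := Finset.ne_of_mem_erase hy
                have hyfree := hTfree y hyT
                rcases List.mem_cons.mp hyfree with rfl | hyrest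
                · exact absurd rfl hyx
                · rw [List.mem_filter]
                  refine ⟨hyrest, ?_⟩
                  have : ¬ BadAP y (x :: s) := by
                    refine badAP_elim hAPF (hTU y hyT) ?_ ?_
                    · intro a ha
                      rcases List.mem_cons.mp ha with rfl | ha
                      · exact hTU _ hxT
                      · exact hsU a ha
                    · intro hmem
                      rcases List.mem_cons.mp hmem with rfl | hmem
                      · exact hyx rfl
                      · exact hTs y hyT hmem
                  cases hb : nf.testBit y
                  · rfl
                  · exact absurd (hinv' y hb) this
              · intro y hy
                have hyx := Finset.ne_of_mem_erase hy
                intro hmem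
                rcases List.mem_cons.mp hmem with rfl | hmem
                · exact hyx rfl
                · exact hTs y (Finset.mem_of_mem_erase hy) hmem
            have := Finset.card_erase_add_one hxT
            omega
          · -- x not in T: use the exclude branch
            have hrest : searchAP fuel (need + 1) s forb rest = true := by
              cases hb : forb.testBit x
              · rw [hb] at h
                simp only [Bool.false_eq_true, if_false, Bool.and_eq_true] at h
                exact h.2
              · rw [hb] at h; simpa using h
            refine ih (need + 1) s forb rest hrest hinv T ?_ hTs hAPF
            intro y hy
            rcases List.mem_cons.mp (hTfree y hy) with rfl | hyr
            · exact absurd hy hxT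
            · exact hyr

lemma good_of_bad {need : ℕ} {free : List ℕ} (x : ℕ) (s : List ℕ)
    (h : BadAP x s) (hx : x ∉ s) : Good need (x :: s) free := by
  intro T hTfree hTs hAPF
  exfalso
  refine badAP_elim hAPF ?_ ?_ hx h
  · exact Finset.mem_union_right _ (by simp)
  · intro a ha
    exact Finset.mem_union_right _ (by simp [ha])

lemma min_split {need : ℕ} {s : List ℕ} (lo len : ℕ)
    (h : ∀ m, lo ≤ m → m < lo + len →
      Good need (m :: s) (List.range' (m + 1) (lo + len - (m + 1)))) :
    Good (need + 1) s (List.range' lo len) := by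
  intro T hTfree hTs hAPF
  rcases T.eq_empty_or_nonempty with rfl | hT
  · simp
  · set m := T.min' hT with hm
    have hmT : m ∈ T := T.min'_mem hT
    have hmfree := mem_range'_iff.mp (hTfree m hmT)
    have G := h m hmfree.1 hmfree.2
    have hUsub : T.erase m ∪ (m :: s).toFinset ⊆ T ∪ s.toFinset := by
      intro y hy
      simp only [Finset.mem_union, Finset.mem_erase, List.toFinset_cons,
        Finset.mem_insert, List.mem_toFinset] at hy ⊢
      rcases hy with ⟨_, hy⟩ | rfl | hy
      · exact Or.inl hy
      · exact Or.inl hmT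
      · exact Or.inr hy
    have hcard : (T.erase m).card < need := by
      refine G (T.erase m) ?_ ?_ (apf_mono hUsub hAPF)
      · intro y hy
        have hyT := Finset.mem_of_mem_erase hy
        have hyx := Finset.ne_of_mem_erase hy
        have h1 := mem_range'_iff.mp (hTfree y hyT)
        have h2 : m ≤ y := T.min'_le y hyT
        rw [mem_range'_iff]
        omega
      · intro y hy hmem
        rcases List.mem_cons.mp hmem with rfl | hmem
        · exact Finset.ne_of_mem_erase hy rfl
        · exact hTs y (Finset.mem_of_mem_erase hy) hmem
    have := Finset.card_erase_add_one hmT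
    omega


theorem G_1_2_4_5 : Good 10 [5, 4, 2, 1] (List.range' 6 30) :=
  sound 36 10 [5, 4, 2, 1] (updForb 5 [4, 2, 1] (updForb 4 [2, 1] (updForb 2 [1] (updForb 1 [] 0)))) (List.range' 6 30) (by decide +kernel) (inv_step (inv_step (inv_step (inv_step inv0 1) 2) 4) 5)

theorem G_1_2_4_8 : Good 10 [8, 4, 2, 1] (List.range' 9 27) :=
  sound 36 10 [8, 4, 2, 1] (updForb 8 [4, 2, 1] (updForb 4 [2, 1] (updForb 2 [1] (updForb 1 [] 0)))) (List.range' 9 27) (by decide +kernel) (inv_step (inv_step (inv_step (inv_step inv0 1) 2) 4) 8)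

theorem G_1_2_4_9 : Good 10 [9, 4, 2, 1] (List.range' 10 26) :=
  sound 36 10 [9, 4, 2, 1] (updForb 9 [4, 2, 1] (updForb 4 [2, 1] (updForb 2 [1] (updForb 1 [] 0)))) (List.range' 10 26) (by decide +kernel) (inv_step (inv_step (inv_step (inv_step inv0 1) 2) 4) 9)

theorem G_1_2_4_10 : Good 10 [10, 4, 2, 1] (List.range' 11 25) :=
  sound 36 10 [10, 4, 2, 1] (updForb 10 [4, 2, 1] (updForb 4 [2, 1] (updForb 2 [1] (updForb 1 [] 0)))) (List.range' 11 25) (by decide +kernel) (inv_step (inv_step (inv_step (inv_step inv0 1) 2) 4) 10)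

theorem G_1_2_4_11 : Good 10 [11, 4, 2, 1] (List.range' 12 24) :=
  sound 36 10 [11, 4, 2, 1] (updForb 11 [4, 2, 1] (updForb 4 [2, 1] (updForb 2 [1] (updForb 1 [] 0)))) (List.range' 12 24) (by decide +kernel) (inv_step (inv_step (inv_step (inv_step inv0 1) 2) 4) 11)

theorem G_1_2_4_12 : Good 10 [12, 4, 2, 1] (List.range' 13 23) :=
  sound 36 10 [12, 4, 2, 1] (updForb 12 [4, 2, 1] (updForb 4 [2, 1] (updForb 2 [1] (updForb 1 [] 0)))) (List.range' 13 23) (by decide +kernel) (inv_step (inv_step (inv_step (inv_step inv0 1) 2) 4) 12)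

theorem G_1_2_4_13 : Good 10 [13, 4, 2, 1] (List.range' 14 22) :=
  sound 36 10 [13, 4, 2, 1] (updForb 13 [4, 2, 1] (updForb 4 [2, 1] (updForb 2 [1] (updForb 1 [] 0)))) (List.range' 14 22) (by decide +kernel) (inv_step (inv_step (inv_step (inv_step inv0 1) 2) 4) 13)

theorem G_1_2_4_14 : Good 10 [14, 4, 2, 1] (List.range' 15 21) :=
  sound 36 10 [14, 4, 2, 1] (updForb 14 [4, 2, 1] (updForb 4 [2, 1] (updForb 2 [1] (updForb 1 [] 0)))) (List.range' 15 21) (by decide +kernel) (inv_step (inv_step (inv_step (inv_step inv0 1) 2) 4) 14)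

theorem G_1_2_4_15 : Good 10 [15, 4, 2, 1] (List.range' 16 20) :=
  sound 36 10 [15, 4, 2, 1] (updForb 15 [4, 2, 1] (updForb 4 [2, 1] (updForb 2 [1] (updForb 1 [] 0)))) (List.range' 16 20) (by decide +kernel) (inv_step (inv_step (inv_step (inv_step inv0 1) 2) 4) 15)

theorem G_1_2_4_16 : Good 10 [16, 4, 2, 1] (List.range' 17 19) :=
  sound 36 10 [16, 4, 2, 1] (updForb 16 [4, 2, 1] (updForb 4 [2, 1] (updForb 2 [1] (updForb 1 [] 0)))) (List.range' 17 19) (by decide +kernel) (inv_step (inv_step (inv_step (inv_step inv0 1) 2) 4) 16)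

theorem G_1_2_4_17 : Good 10 [17, 4, 2, 1] (List.range' 18 18) :=
  sound 36 10 [17, 4, 2, 1] (updForb 17 [4, 2, 1] (updForb 4 [2, 1] (updForb 2 [1] (updForb 1 [] 0)))) (List.range' 18 18) (by decide +kernel) (inv_step (inv_step (inv_step (inv_step inv0 1) 2) 4) 17)

theorem G_1_2_4_18 : Good 10 [18, 4, 2, 1] (List.range' 19 17) :=
  sound 36 10 [18, 4, 2, 1] (updForb 18 [4, 2, 1] (updForb 4 [2, 1] (updForb 2 [1] (updForb 1 [] 0)))) (List.range' 19 17) (by decide +kernel) (inv_step (inv_step (inv_step (inv_step inv0 1) 2) 4) 18)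

theorem G_1_2_4_19 : Good 10 [19, 4, 2, 1] (List.range' 20 16) :=
  sound 36 10 [19, 4, 2, 1] (updForb 19 [4, 2, 1] (updForb 4 [2, 1] (updForb 2 [1] (updForb 1 [] 0)))) (List.range' 20 16) (by decide +kernel) (inv_step (inv_step (inv_step (inv_step inv0 1) 2) 4) 19)

theorem G_1_2_4_20 : Good 10 [20, 4, 2, 1] (List.range' 21 15) :=
  sound 36 10 [20, 4, 2, 1] (updForb 20 [4, 2, 1] (updForb 4 [2, 1] (updForb 2 [1] (updForb 1 [] 0)))) (List.range' 21 15) (by decide +kernel) (inv_step (inv_step (inv_step (inv_step inv0 1) 2) 4) 20)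

theorem G_1_2_4_21 : Good 10 [21, 4, 2, 1] (List.range' 22 14) :=
  sound 36 10 [21, 4, 2, 1] (updForb 21 [4, 2, 1] (updForb 4 [2, 1] (updForb 2 [1] (updForb 1 [] 0)))) (List.range' 22 14) (by decide +kernel) (inv_step (inv_step (inv_step (inv_step inv0 1) 2) 4) 21)

theorem G_1_2_4_22 : Good 10 [22, 4, 2, 1] (List.range' 23 13) :=
  sound 36 10 [22, 4, 2, 1] (updForb 22 [4, 2, 1] (updForb 4 [2, 1] (updForb 2 [1] (updForb 1 [] 0)))) (List.range' 23 13) (by decide +kernel) (inv_step (inv_step (inv_step (inv_step inv0 1) 2) 4) 22)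

theorem G_1_2_4_23 : Good 10 [23, 4, 2, 1] (List.range' 24 12) :=
  sound 36 10 [23, 4, 2, 1] (updForb 23 [4, 2, 1] (updForb 4 [2, 1] (updForb 2 [1] (updForb 1 [] 0)))) (List.range' 24 12) (by decide +kernel) (inv_step (inv_step (inv_step (inv_step inv0 1) 2) 4) 23)

theorem G_1_2_4_24 : Good 10 [24, 4, 2, 1] (List.range' 25 11) :=
  sound 36 10 [24, 4, 2, 1] (updForb 24 [4, 2, 1] (updForb 4 [2, 1] (updForb 2 [1] (updForb 1 [] 0)))) (List.range' 25 11) (by decide +kernel) (inv_step (inv_step (inv_step (inv_step inv0 1) 2) 4) 24)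

theorem G_1_2_4_25 : Good 10 [25, 4, 2, 1] (List.range' 26 10) :=
  sound 36 10 [25, 4, 2, 1] (updForb 25 [4, 2, 1] (updForb 4 [2, 1] (updForb 2 [1] (updForb 1 [] 0)))) (List.range' 26 10) (by decide +kernel) (inv_step (inv_step (inv_step (inv_step inv0 1) 2) 4) 25)

theorem G_1_2_4_26 : Good 10 [26, 4, 2, 1] (List.range' 27 9) :=
  sound 36 10 [26, 4, 2, 1] (updForb 26 [4, 2, 1] (updForb 4 [2, 1] (updForb 2 [1] (updForb 1 [] 0)))) (List.range' 27 9) (by decide +kernel) (inv_step (inv_step (inv_step (inv_step inv0 1) 2) 4) 26)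

theorem G_1_2_4_27 : Good 10 [27, 4, 2, 1] (List.range' 28 8) :=
  sound 36 10 [27, 4, 2, 1] (updForb 27 [4, 2, 1] (updForb 4 [2, 1] (updForb 2 [1] (updForb 1 [] 0)))) (List.range' 28 8) (by decide +kernel) (inv_step (inv_step (inv_step (inv_step inv0 1) 2) 4) 27)

theorem G_1_2_4_28 : Good 10 [28, 4, 2, 1] (List.range' 29 7) :=
  sound 36 10 [28, 4, 2, 1] (updForb 28 [4, 2, 1] (updForb 4 [2, 1] (updForb 2 [1] (updForb 1 [] 0)))) (List.range' 29 7) (by decide +kernel) (inv_step (inv_step (inv_step (inv_step inv0 1) 2) 4) 28)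

theorem G_1_2_4_29 : Good 10 [29, 4, 2, 1] (List.range' 30 6) :=
  sound 36 10 [29, 4, 2, 1] (updForb 29 [4, 2, 1] (updForb 4 [2, 1] (updForb 2 [1] (updForb 1 [] 0)))) (List.range' 30 6) (by decide +kernel) (inv_step (inv_step (inv_step (inv_step inv0 1) 2) 4) 29)

theorem G_1_2_4_30 : Good 10 [30, 4, 2, 1] (List.range' 31 5) :=
  sound 36 10 [30, 4, 2, 1] (updForb 30 [4, 2, 1] (updForb 4 [2, 1] (updForb 2 [1] (updForb 1 [] 0)))) (List.range' 31 5) (by decide +kernel) (inv_step (inv_step (inv_step (inv_step inv0 1) 2) 4) 30)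

theorem G_1_2_4_31 : Good 10 [31, 4, 2, 1] (List.range' 32 4) :=
  sound 36 10 [31, 4, 2, 1] (updForb 31 [4, 2, 1] (updForb 4 [2, 1] (updForb 2 [1] (updForb 1 [] 0)))) (List.range' 32 4) (by decide +kernel) (inv_step (inv_step (inv_step (inv_step inv0 1) 2) 4) 31)

theorem G_1_2_4_32 : Good 10 [32, 4, 2, 1] (List.range' 33 3) :=
  sound 36 10 [32, 4, 2, 1] (updForb 32 [4, 2, 1] (updForb 4 [2, 1] (updForb 2 [1] (updForb 1 [] 0)))) (List.range' 33 3) (by decide +kernel) (inv_step (inv_step (inv_step (inv_step inv0 1) 2) 4) 32)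

theorem G_1_2_4_33 : Good 10 [33, 4, 2, 1] (List.range' 34 2) :=
  sound 36 10 [33, 4, 2, 1] (updForb 33 [4, 2, 1] (updForb 4 [2, 1] (updForb 2 [1] (updForb 1 [] 0)))) (List.range' 34 2) (by decide +kernel) (inv_step (inv_step (inv_step (inv_step inv0 1) 2) 4) 33)

theorem G_1_2_4_34 : Good 10 [34, 4, 2, 1] (List.range' 35 1) :=
  sound 36 10 [34, 4, 2, 1] (updForb 34 [4, 2, 1] (updForb 4 [2, 1] (updForb 2 [1] (updForb 1 [] 0)))) (List.range' 35 1) (by decide +kernel) (inv_step (inv_step (inv_step (inv_step inv0 1) 2) 4) 34)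

theorem G_1_2_4_35 : Good 10 [35, 4, 2, 1] (List.range' 36 0) :=
  sound 36 10 [35, 4, 2, 1] (updForb 35 [4, 2, 1] (updForb 4 [2, 1] (updForb 2 [1] (updForb 1 [] 0)))) (List.range' 36 0) (by decide +kernel) (inv_step (inv_step (inv_step (inv_step inv0 1) 2) 4) 35)

theorem G_1_2_4 : Good 11 [4, 2, 1] (List.range' 5 31) := by
  refine min_split 5 31 ?_
  intro m hm1 hm2
  interval_cases m
  · exact G_1_2_4_5
  · exact good_of_bad 6 [4, 2, 1] (by decide) (by decide)
  · exact good_of_bad 7 [4, 2, 1] (by decide) (by decide)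
  · exact G_1_2_4_8
  · exact G_1_2_4_9
  · exact G_1_2_4_10
  · exact G_1_2_4_11
  · exact G_1_2_4_12
  · exact G_1_2_4_13
  · exact G_1_2_4_14
  · exact G_1_2_4_15
  · exact G_1_2_4_16
  · exact G_1_2_4_17
  · exact G_1_2_4_18
  · exact G_1_2_4_19
  · exact G_1_2_4_20
  · exact G_1_2_4_21
  · exact G_1_2_4_22
  · exact G_1_2_4_23
  · exact G_1_2_4_24
  · exact G_1_2_4_25
  · exact G_1_2_4_26
  · exact G_1_2_4_27
  · exact G_1_2_4_28
  · exact G_1_2_4_29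
  · exact G_1_2_4_30
  · exact G_1_2_4_31
  · exact G_1_2_4_32
  · exact G_1_2_4_33
  · exact G_1_2_4_34
  · exact G_1_2_4_35

theorem G_1_2_5 : Good 11 [5, 2, 1] (List.range' 6 30) :=
  sound 36 11 [5, 2, 1] (updForb 5 [2, 1] (updForb 2 [1] (updForb 1 [] 0))) (List.range' 6 30) (by decide +kernel) (inv_step (inv_step (inv_step inv0 1) 2) 5)

theorem G_1_2_6 : Good 11 [6, 2, 1] (List.range' 7 29) :=
  sound 36 11 [6, 2, 1] (updForb 6 [2, 1] (updForb 2 [1] (updForb 1 [] 0))) (List.range' 7 29) (by decide +kernel) (inv_step (inv_step (inv_step inv0 1) 2) 6)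

theorem G_1_2_7 : Good 11 [7, 2, 1] (List.range' 8 28) :=
  sound 36 11 [7, 2, 1] (updForb 7 [2, 1] (updForb 2 [1] (updForb 1 [] 0))) (List.range' 8 28) (by decide +kernel) (inv_step (inv_step (inv_step inv0 1) 2) 7)

theorem G_1_2_8 : Good 11 [8, 2, 1] (List.range' 9 27) :=
  sound 36 11 [8, 2, 1] (updForb 8 [2, 1] (updForb 2 [1] (updForb 1 [] 0))) (List.range' 9 27) (by decide +kernel) (inv_step (inv_step (inv_step inv0 1) 2) 8)

theorem G_1_2_9 : Good 11 [9, 2, 1] (List.range' 10 26) :=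
  sound 36 11 [9, 2, 1] (updForb 9 [2, 1] (updForb 2 [1] (updForb 1 [] 0))) (List.range' 10 26) (by decide +kernel) (inv_step (inv_step (inv_step inv0 1) 2) 9)

theorem G_1_2_10 : Good 11 [10, 2, 1] (List.range' 11 25) :=
  sound 36 11 [10, 2, 1] (updForb 10 [2, 1] (updForb 2 [1] (updForb 1 [] 0))) (List.range' 11 25) (by decide +kernel) (inv_step (inv_step (inv_step inv0 1) 2) 10)

theorem G_1_2_11 : Good 11 [11, 2, 1] (List.range' 12 24) :=
  sound 36 11 [11, 2, 1] (updForb 11 [2, 1] (updForb 2 [1] (updForb 1 [] 0))) (List.range' 12 24) (by decide +kernel) (inv_step (inv_step (inv_step inv0 1) 2) 11)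

theorem G_1_2_12 : Good 11 [12, 2, 1] (List.range' 13 23) :=
  sound 36 11 [12, 2, 1] (updForb 12 [2, 1] (updForb 2 [1] (updForb 1 [] 0))) (List.range' 13 23) (by decide +kernel) (inv_step (inv_step (inv_step inv0 1) 2) 12)

theorem G_1_2_13 : Good 11 [13, 2, 1] (List.range' 14 22) :=
  sound 36 11 [13, 2, 1] (updForb 13 [2, 1] (updForb 2 [1] (updForb 1 [] 0))) (List.range' 14 22) (by decide +kernel) (inv_step (inv_step (inv_step inv0 1) 2) 13)

theorem G_1_2_14 : Good 11 [14, 2, 1] (List.range' 15 21) :=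
  sound 36 11 [14, 2, 1] (updForb 14 [2, 1] (updForb 2 [1] (updForb 1 [] 0))) (List.range' 15 21) (by decide +kernel) (inv_step (inv_step (inv_step inv0 1) 2) 14)

theorem G_1_2_15 : Good 11 [15, 2, 1] (List.range' 16 20) :=
  sound 36 11 [15, 2, 1] (updForb 15 [2, 1] (updForb 2 [1] (updForb 1 [] 0))) (List.range' 16 20) (by decide +kernel) (inv_step (inv_step (inv_step inv0 1) 2) 15)

theorem G_1_2_16 : Good 11 [16, 2, 1] (List.range' 17 19) :=
  sound 36 11 [16, 2, 1] (updForb 16 [2, 1] (updForb 2 [1] (updForb 1 [] 0))) (List.range' 17 19) (by decide +kernel) (inv_step (inv_step (inv_step inv0 1) 2) 16)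

theorem G_1_2_17 : Good 11 [17, 2, 1] (List.range' 18 18) :=
  sound 36 11 [17, 2, 1] (updForb 17 [2, 1] (updForb 2 [1] (updForb 1 [] 0))) (List.range' 18 18) (by decide +kernel) (inv_step (inv_step (inv_step inv0 1) 2) 17)

theorem G_1_2_18 : Good 11 [18, 2, 1] (List.range' 19 17) :=
  sound 36 11 [18, 2, 1] (updForb 18 [2, 1] (updForb 2 [1] (updForb 1 [] 0))) (List.range' 19 17) (by decide +kernel) (inv_step (inv_step (inv_step inv0 1) 2) 18)

theorem G_1_2_19 : Good 11 [19, 2, 1] (List.range' 20 16) :=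
  sound 36 11 [19, 2, 1] (updForb 19 [2, 1] (updForb 2 [1] (updForb 1 [] 0))) (List.range' 20 16) (by decide +kernel) (inv_step (inv_step (inv_step inv0 1) 2) 19)

theorem G_1_2_20 : Good 11 [20, 2, 1] (List.range' 21 15) :=
  sound 36 11 [20, 2, 1] (updForb 20 [2, 1] (updForb 2 [1] (updForb 1 [] 0))) (List.range' 21 15) (by decide +kernel) (inv_step (inv_step (inv_step inv0 1) 2) 20)

theorem G_1_2_21 : Good 11 [21, 2, 1] (List.range' 22 14) :=
  sound 36 11 [21, 2, 1] (updForb 21 [2, 1] (updForb 2 [1] (updForb 1 [] 0))) (List.range' 22 14) (by decide +kernel) (inv_step (inv_step (inv_step inv0 1) 2) 21)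

theorem G_1_2_22 : Good 11 [22, 2, 1] (List.range' 23 13) :=
  sound 36 11 [22, 2, 1] (updForb 22 [2, 1] (updForb 2 [1] (updForb 1 [] 0))) (List.range' 23 13) (by decide +kernel) (inv_step (inv_step (inv_step inv0 1) 2) 22)

theorem G_1_2_23 : Good 11 [23, 2, 1] (List.range' 24 12) :=
  sound 36 11 [23, 2, 1] (updForb 23 [2, 1] (updForb 2 [1] (updForb 1 [] 0))) (List.range' 24 12) (by decide +kernel) (inv_step (inv_step (inv_step inv0 1) 2) 23)

theorem G_1_2_24 : Good 11 [24, 2, 1] (List.range' 25 11) :=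
  sound 36 11 [24, 2, 1] (updForb 24 [2, 1] (updForb 2 [1] (updForb 1 [] 0))) (List.range' 25 11) (by decide +kernel) (inv_step (inv_step (inv_step inv0 1) 2) 24)

theorem G_1_2_25 : Good 11 [25, 2, 1] (List.range' 26 10) :=
  sound 36 11 [25, 2, 1] (updForb 25 [2, 1] (updForb 2 [1] (updForb 1 [] 0))) (List.range' 26 10) (by decide +kernel) (inv_step (inv_step (inv_step inv0 1) 2) 25)

theorem G_1_2_26 : Good 11 [26, 2, 1] (List.range' 27 9) :=
  sound 36 11 [26, 2, 1] (updForb 26 [2, 1] (updForb 2 [1] (updForb 1 [] 0))) (List.range' 27 9) (by decide +kernel) (inv_step (inv_step (inv_step inv0 1) 2) 26)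

theorem G_1_2_27 : Good 11 [27, 2, 1] (List.range' 28 8) :=
  sound 36 11 [27, 2, 1] (updForb 27 [2, 1] (updForb 2 [1] (updForb 1 [] 0))) (List.range' 28 8) (by decide +kernel) (inv_step (inv_step (inv_step inv0 1) 2) 27)

theorem G_1_2_28 : Good 11 [28, 2, 1] (List.range' 29 7) :=
  sound 36 11 [28, 2, 1] (updForb 28 [2, 1] (updForb 2 [1] (updForb 1 [] 0))) (List.range' 29 7) (by decide +kernel) (inv_step (inv_step (inv_step inv0 1) 2) 28)

theorem G_1_2_29 : Good 11 [29, 2, 1] (List.range' 30 6) :=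
  sound 36 11 [29, 2, 1] (updForb 29 [2, 1] (updForb 2 [1] (updForb 1 [] 0))) (List.range' 30 6) (by decide +kernel) (inv_step (inv_step (inv_step inv0 1) 2) 29)

theorem G_1_2_30 : Good 11 [30, 2, 1] (List.range' 31 5) :=
  sound 36 11 [30, 2, 1] (updForb 30 [2, 1] (updForb 2 [1] (updForb 1 [] 0))) (List.range' 31 5) (by decide +kernel) (inv_step (inv_step (inv_step inv0 1) 2) 30)

theorem G_1_2_31 : Good 11 [31, 2, 1] (List.range' 32 4) :=
  sound 36 11 [31, 2, 1] (updForb 31 [2, 1] (updForb 2 [1] (updForb 1 [] 0))) (List.range' 32 4) (by decide +kernel) (inv_step (inv_step (inv_step inv0 1) 2) 31)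

theorem G_1_2_32 : Good 11 [32, 2, 1] (List.range' 33 3) :=
  sound 36 11 [32, 2, 1] (updForb 32 [2, 1] (updForb 2 [1] (updForb 1 [] 0))) (List.range' 33 3) (by decide +kernel) (inv_step (inv_step (inv_step inv0 1) 2) 32)

theorem G_1_2_33 : Good 11 [33, 2, 1] (List.range' 34 2) :=
  sound 36 11 [33, 2, 1] (updForb 33 [2, 1] (updForb 2 [1] (updForb 1 [] 0))) (List.range' 34 2) (by decide +kernel) (inv_step (inv_step (inv_step inv0 1) 2) 33)

theorem G_1_2_34 : Good 11 [34, 2, 1] (List.range' 35 1) :=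
  sound 36 11 [34, 2, 1] (updForb 34 [2, 1] (updForb 2 [1] (updForb 1 [] 0))) (List.range' 35 1) (by decide +kernel) (inv_step (inv_step (inv_step inv0 1) 2) 34)

theorem G_1_2_35 : Good 11 [35, 2, 1] (List.range' 36 0) :=
  sound 36 11 [35, 2, 1] (updForb 35 [2, 1] (updForb 2 [1] (updForb 1 [] 0))) (List.range' 36 0) (by decide +kernel) (inv_step (inv_step (inv_step inv0 1) 2) 35)

theorem G_1_2 : Good 12 [2, 1] (List.range' 3 33) := by
  refine min_split 3 33 ?_
  intro m hm1 hm2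
  interval_cases m
  · exact good_of_bad 3 [2, 1] (by decide) (by decide)
  · exact G_1_2_4
  · exact G_1_2_5
  · exact G_1_2_6
  · exact G_1_2_7
  · exact G_1_2_8
  · exact G_1_2_9
  · exact G_1_2_10
  · exact G_1_2_11
  · exact G_1_2_12
  · exact G_1_2_13
  · exact G_1_2_14
  · exact G_1_2_15
  · exact G_1_2_16
  · exact G_1_2_17
  · exact G_1_2_18
  · exact G_1_2_19
  · exact G_1_2_20
  · exact G_1_2_21
  · exact G_1_2_22
  · exact G_1_2_23
  · exact G_1_2_24
  · exact G_1_2_25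
  · exact G_1_2_26
  · exact G_1_2_27
  · exact G_1_2_28
  · exact G_1_2_29
  · exact G_1_2_30
  · exact G_1_2_31
  · exact G_1_2_32
  · exact G_1_2_33
  · exact G_1_2_34
  · exact G_1_2_35

theorem G_1_3_4_6 : Good 10 [6, 4, 3, 1] (List.range' 7 29) :=
  sound 36 10 [6, 4, 3, 1] (updForb 6 [4, 3, 1] (updForb 4 [3, 1] (updForb 3 [1] (updForb 1 [] 0)))) (List.range' 7 29) (by decide +kernel) (inv_step (inv_step (inv_step (inv_step inv0 1) 3) 4) 6)

theorem G_1_3_4_8 : Good 10 [8, 4, 3, 1] (List.range' 9 27) :=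
  sound 36 10 [8, 4, 3, 1] (updForb 8 [4, 3, 1] (updForb 4 [3, 1] (updForb 3 [1] (updForb 1 [] 0)))) (List.range' 9 27) (by decide +kernel) (inv_step (inv_step (inv_step (inv_step inv0 1) 3) 4) 8)

theorem G_1_3_4_9 : Good 10 [9, 4, 3, 1] (List.range' 10 26) :=
  sound 36 10 [9, 4, 3, 1] (updForb 9 [4, 3, 1] (updForb 4 [3, 1] (updForb 3 [1] (updForb 1 [] 0)))) (List.range' 10 26) (by decide +kernel) (inv_step (inv_step (inv_step (inv_step inv0 1) 3) 4) 9)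

theorem G_1_3_4_10 : Good 10 [10, 4, 3, 1] (List.range' 11 25) :=
  sound 36 10 [10, 4, 3, 1] (updForb 10 [4, 3, 1] (updForb 4 [3, 1] (updForb 3 [1] (updForb 1 [] 0)))) (List.range' 11 25) (by decide +kernel) (inv_step (inv_step (inv_step (inv_step inv0 1) 3) 4) 10)

theorem G_1_3_4_11 : Good 10 [11, 4, 3, 1] (List.range' 12 24) :=
  sound 36 10 [11, 4, 3, 1] (updForb 11 [4, 3, 1] (updForb 4 [3, 1] (updForb 3 [1] (updForb 1 [] 0)))) (List.range' 12 24) (by decide +kernel) (inv_step (inv_step (inv_step (inv_step inv0 1) 3) 4) 11)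

theorem G_1_3_4_12 : Good 10 [12, 4, 3, 1] (List.range' 13 23) :=
  sound 36 10 [12, 4, 3, 1] (updForb 12 [4, 3, 1] (updForb 4 [3, 1] (updForb 3 [1] (updForb 1 [] 0)))) (List.range' 13 23) (by decide +kernel) (inv_step (inv_step (inv_step (inv_step inv0 1) 3) 4) 12)

theorem G_1_3_4_13 : Good 10 [13, 4, 3, 1] (List.range' 14 22) :=
  sound 36 10 [13, 4, 3, 1] (updForb 13 [4, 3, 1] (updForb 4 [3, 1] (updForb 3 [1] (updForb 1 [] 0)))) (List.range' 14 22) (by decide +kernel) (inv_step (inv_step (inv_step (inv_step inv0 1) 3) 4) 13)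

theorem G_1_3_4_14 : Good 10 [14, 4, 3, 1] (List.range' 15 21) :=
  sound 36 10 [14, 4, 3, 1] (updForb 14 [4, 3, 1] (updForb 4 [3, 1] (updForb 3 [1] (updForb 1 [] 0)))) (List.range' 15 21) (by decide +kernel) (inv_step (inv_step (inv_step (inv_step inv0 1) 3) 4) 14)

theorem G_1_3_4_15 : Good 10 [15, 4, 3, 1] (List.range' 16 20) :=
  sound 36 10 [15, 4, 3, 1] (updForb 15 [4, 3, 1] (updForb 4 [3, 1] (updForb 3 [1] (updForb 1 [] 0)))) (List.range' 16 20) (by decide +kernel) (inv_step (inv_step (inv_step (inv_step inv0 1) 3) 4) 15)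

theorem G_1_3_4_16 : Good 10 [16, 4, 3, 1] (List.range' 17 19) :=
  sound 36 10 [16, 4, 3, 1] (updForb 16 [4, 3, 1] (updForb 4 [3, 1] (updForb 3 [1] (updForb 1 [] 0)))) (List.range' 17 19) (by decide +kernel) (inv_step (inv_step (inv_step (inv_step inv0 1) 3) 4) 16)

theorem G_1_3_4_17 : Good 10 [17, 4, 3, 1] (List.range' 18 18) :=
  sound 36 10 [17, 4, 3, 1] (updForb 17 [4, 3, 1] (updForb 4 [3, 1] (updForb 3 [1] (updForb 1 [] 0)))) (List.range' 18 18) (by decide +kernel) (inv_step (inv_step (inv_step (inv_step inv0 1) 3) 4) 17)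

theorem G_1_3_4_18 : Good 10 [18, 4, 3, 1] (List.range' 19 17) :=
  sound 36 10 [18, 4, 3, 1] (updForb 18 [4, 3, 1] (updForb 4 [3, 1] (updForb 3 [1] (updForb 1 [] 0)))) (List.range' 19 17) (by decide +kernel) (inv_step (inv_step (inv_step (inv_step inv0 1) 3) 4) 18)

theorem G_1_3_4_19 : Good 10 [19, 4, 3, 1] (List.range' 20 16) :=
  sound 36 10 [19, 4, 3, 1] (updForb 19 [4, 3, 1] (updForb 4 [3, 1] (updForb 3 [1] (updForb 1 [] 0)))) (List.range' 20 16) (by decide +kernel) (inv_step (inv_step (inv_step (inv_step inv0 1) 3) 4) 19)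

theorem G_1_3_4_20 : Good 10 [20, 4, 3, 1] (List.range' 21 15) :=
  sound 36 10 [20, 4, 3, 1] (updForb 20 [4, 3, 1] (updForb 4 [3, 1] (updForb 3 [1] (updForb 1 [] 0)))) (List.range' 21 15) (by decide +kernel) (inv_step (inv_step (inv_step (inv_step inv0 1) 3) 4) 20)

theorem G_1_3_4_21 : Good 10 [21, 4, 3, 1] (List.range' 22 14) :=
  sound 36 10 [21, 4, 3, 1] (updForb 21 [4, 3, 1] (updForb 4 [3, 1] (updForb 3 [1] (updForb 1 [] 0)))) (List.range' 22 14) (by decide +kernel) (inv_step (inv_step (inv_step (inv_step inv0 1) 3) 4) 21)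

theorem G_1_3_4_22 : Good 10 [22, 4, 3, 1] (List.range' 23 13) :=
  sound 36 10 [22, 4, 3, 1] (updForb 22 [4, 3, 1] (updForb 4 [3, 1] (updForb 3 [1] (updForb 1 [] 0)))) (List.range' 23 13) (by decide +kernel) (inv_step (inv_step (inv_step (inv_step inv0 1) 3) 4) 22)

theorem G_1_3_4_23 : Good 10 [23, 4, 3, 1] (List.range' 24 12) :=
  sound 36 10 [23, 4, 3, 1] (updForb 23 [4, 3, 1] (updForb 4 [3, 1] (updForb 3 [1] (updForb 1 [] 0)))) (List.range' 24 12) (by decide +kernel) (inv_step (inv_step (inv_step (inv_step inv0 1) 3) 4) 23)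

theorem G_1_3_4_24 : Good 10 [24, 4, 3, 1] (List.range' 25 11) :=
  sound 36 10 [24, 4, 3, 1] (updForb 24 [4, 3, 1] (updForb 4 [3, 1] (updForb 3 [1] (updForb 1 [] 0)))) (List.range' 25 11) (by decide +kernel) (inv_step (inv_step (inv_step (inv_step inv0 1) 3) 4) 24)

theorem G_1_3_4_25 : Good 10 [25, 4, 3, 1] (List.range' 26 10) :=
  sound 36 10 [25, 4, 3, 1] (updForb 25 [4, 3, 1] (updForb 4 [3, 1] (updForb 3 [1] (updForb 1 [] 0)))) (List.range' 26 10) (by decide +kernel) (inv_step (inv_step (inv_step (inv_step inv0 1) 3) 4) 25)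

theorem G_1_3_4_26 : Good 10 [26, 4, 3, 1] (List.range' 27 9) :=
  sound 36 10 [26, 4, 3, 1] (updForb 26 [4, 3, 1] (updForb 4 [3, 1] (updForb 3 [1] (updForb 1 [] 0)))) (List.range' 27 9) (by decide +kernel) (inv_step (inv_step (inv_step (inv_step inv0 1) 3) 4) 26)

theorem G_1_3_4_27 : Good 10 [27, 4, 3, 1] (List.range' 28 8) :=
  sound 36 10 [27, 4, 3, 1] (updForb 27 [4, 3, 1] (updForb 4 [3, 1] (updForb 3 [1] (updForb 1 [] 0)))) (List.range' 28 8) (by decide +kernel) (inv_step (inv_step (inv_step (inv_step inv0 1) 3) 4) 27)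

theorem G_1_3_4_28 : Good 10 [28, 4, 3, 1] (List.range' 29 7) :=
  sound 36 10 [28, 4, 3, 1] (updForb 28 [4, 3, 1] (updForb 4 [3, 1] (updForb 3 [1] (updForb 1 [] 0)))) (List.range' 29 7) (by decide +kernel) (inv_step (inv_step (inv_step (inv_step inv0 1) 3) 4) 28)

theorem G_1_3_4_29 : Good 10 [29, 4, 3, 1] (List.range' 30 6) :=
  sound 36 10 [29, 4, 3, 1] (updForb 29 [4, 3, 1] (updForb 4 [3, 1] (updForb 3 [1] (updForb 1 [] 0)))) (List.range' 30 6) (by decide +kernel) (inv_step (inv_step (inv_step (inv_step inv0 1) 3) 4) 29)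

theorem G_1_3_4_30 : Good 10 [30, 4, 3, 1] (List.range' 31 5) :=
  sound 36 10 [30, 4, 3, 1] (updForb 30 [4, 3, 1] (updForb 4 [3, 1] (updForb 3 [1] (updForb 1 [] 0)))) (List.range' 31 5) (by decide +kernel) (inv_step (inv_step (inv_step (inv_step inv0 1) 3) 4) 30)

theorem G_1_3_4_31 : Good 10 [31, 4, 3, 1] (List.range' 32 4) :=
  sound 36 10 [31, 4, 3, 1] (updForb 31 [4, 3, 1] (updForb 4 [3, 1] (updForb 3 [1] (updForb 1 [] 0)))) (List.range' 32 4) (by decide +kernel) (inv_step (inv_step (inv_step (inv_step inv0 1) 3) 4) 31)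

theorem G_1_3_4_32 : Good 10 [32, 4, 3, 1] (List.range' 33 3) :=
  sound 36 10 [32, 4, 3, 1] (updForb 32 [4, 3, 1] (updForb 4 [3, 1] (updForb 3 [1] (updForb 1 [] 0)))) (List.range' 33 3) (by decide +kernel) (inv_step (inv_step (inv_step (inv_step inv0 1) 3) 4) 32)

theorem G_1_3_4_33 : Good 10 [33, 4, 3, 1] (List.range' 34 2) :=
  sound 36 10 [33, 4, 3, 1] (updForb 33 [4, 3, 1] (updForb 4 [3, 1] (updForb 3 [1] (updForb 1 [] 0)))) (List.range' 34 2) (by decide +kernel) (inv_step (inv_step (inv_step (inv_step inv0 1) 3) 4) 33)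

theorem G_1_3_4_34 : Good 10 [34, 4, 3, 1] (List.range' 35 1) :=
  sound 36 10 [34, 4, 3, 1] (updForb 34 [4, 3, 1] (updForb 4 [3, 1] (updForb 3 [1] (updForb 1 [] 0)))) (List.range' 35 1) (by decide +kernel) (inv_step (inv_step (inv_step (inv_step inv0 1) 3) 4) 34)

theorem G_1_3_4_35 : Good 10 [35, 4, 3, 1] (List.range' 36 0) :=
  sound 36 10 [35, 4, 3, 1] (updForb 35 [4, 3, 1] (updForb 4 [3, 1] (updForb 3 [1] (updForb 1 [] 0)))) (List.range' 36 0) (by decide +kernel) (inv_step (inv_step (inv_step (inv_step inv0 1) 3) 4) 35)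

theorem G_1_3_4 : Good 11 [4, 3, 1] (List.range' 5 31) := by
  refine min_split 5 31 ?_
  intro m hm1 hm2
  interval_cases m
  · exact good_of_bad 5 [4, 3, 1] (by decide) (by decide)
  · exact G_1_3_4_6
  · exact good_of_bad 7 [4, 3, 1] (by decide) (by decide)
  · exact G_1_3_4_8
  · exact G_1_3_4_9
  · exact G_1_3_4_10
  · exact G_1_3_4_11
  · exact G_1_3_4_12
  · exact G_1_3_4_13
  · exact G_1_3_4_14
  · exact G_1_3_4_15
  · exact G_1_3_4_16
  · exact G_1_3_4_17
  · exact G_1_3_4_18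
  · exact G_1_3_4_19
  · exact G_1_3_4_20
  · exact G_1_3_4_21
  · exact G_1_3_4_22
  · exact G_1_3_4_23
  · exact G_1_3_4_24
  · exact G_1_3_4_25
  · exact G_1_3_4_26
  · exact G_1_3_4_27
  · exact G_1_3_4_28
  · exact G_1_3_4_29
  · exact G_1_3_4_30
  · exact G_1_3_4_31
  · exact G_1_3_4_32
  · exact G_1_3_4_33
  · exact G_1_3_4_34
  · exact G_1_3_4_35

theorem G_1_3_6 : Good 11 [6, 3, 1] (List.range' 7 29) :=
  sound 36 11 [6, 3, 1] (updForb 6 [3, 1] (updForb 3 [1] (updForb 1 [] 0))) (List.range' 7 29) (by decide +kernel) (inv_step (inv_step (inv_step inv0 1) 3) 6)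

theorem G_1_3_7 : Good 11 [7, 3, 1] (List.range' 8 28) :=
  sound 36 11 [7, 3, 1] (updForb 7 [3, 1] (updForb 3 [1] (updForb 1 [] 0))) (List.range' 8 28) (by decide +kernel) (inv_step (inv_step (inv_step inv0 1) 3) 7)

theorem G_1_3_8 : Good 11 [8, 3, 1] (List.range' 9 27) :=
  sound 36 11 [8, 3, 1] (updForb 8 [3, 1] (updForb 3 [1] (updForb 1 [] 0))) (List.range' 9 27) (by decide +kernel) (inv_step (inv_step (inv_step inv0 1) 3) 8)

theorem G_1_3_9 : Good 11 [9, 3, 1] (List.range' 10 26) :=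
  sound 36 11 [9, 3, 1] (updForb 9 [3, 1] (updForb 3 [1] (updForb 1 [] 0))) (List.range' 10 26) (by decide +kernel) (inv_step (inv_step (inv_step inv0 1) 3) 9)

theorem G_1_3_10 : Good 11 [10, 3, 1] (List.range' 11 25) :=
  sound 36 11 [10, 3, 1] (updForb 10 [3, 1] (updForb 3 [1] (updForb 1 [] 0))) (List.range' 11 25) (by decide +kernel) (inv_step (inv_step (inv_step inv0 1) 3) 10)

theorem G_1_3_11 : Good 11 [11, 3, 1] (List.range' 12 24) :=
  sound 36 11 [11, 3, 1] (updForb 11 [3, 1] (updForb 3 [1] (updForb 1 [] 0))) (List.range' 12 24) (by decide +kernel) (inv_step (inv_step (inv_step inv0 1) 3) 11)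

theorem G_1_3_12 : Good 11 [12, 3, 1] (List.range' 13 23) :=
  sound 36 11 [12, 3, 1] (updForb 12 [3, 1] (updForb 3 [1] (updForb 1 [] 0))) (List.range' 13 23) (by decide +kernel) (inv_step (inv_step (inv_step inv0 1) 3) 12)

theorem G_1_3_13 : Good 11 [13, 3, 1] (List.range' 14 22) :=
  sound 36 11 [13, 3, 1] (updForb 13 [3, 1] (updForb 3 [1] (updForb 1 [] 0))) (List.range' 14 22) (by decide +kernel) (inv_step (inv_step (inv_step inv0 1) 3) 13)

theorem G_1_3_14 : Good 11 [14, 3, 1] (List.range' 15 21) :=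
  sound 36 11 [14, 3, 1] (updForb 14 [3, 1] (updForb 3 [1] (updForb 1 [] 0))) (List.range' 15 21) (by decide +kernel) (inv_step (inv_step (inv_step inv0 1) 3) 14)

theorem G_1_3_15 : Good 11 [15, 3, 1] (List.range' 16 20) :=
  sound 36 11 [15, 3, 1] (updForb 15 [3, 1] (updForb 3 [1] (updForb 1 [] 0))) (List.range' 16 20) (by decide +kernel) (inv_step (inv_step (inv_step inv0 1) 3) 15)

theorem G_1_3_16 : Good 11 [16, 3, 1] (List.range' 17 19) :=
  sound 36 11 [16, 3, 1] (updForb 16 [3, 1] (updForb 3 [1] (updForb 1 [] 0))) (List.range' 17 19) (by decide +kernel) (inv_step (inv_step (inv_step inv0 1) 3) 16)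

theorem G_1_3_17 : Good 11 [17, 3, 1] (List.range' 18 18) :=
  sound 36 11 [17, 3, 1] (updForb 17 [3, 1] (updForb 3 [1] (updForb 1 [] 0))) (List.range' 18 18) (by decide +kernel) (inv_step (inv_step (inv_step inv0 1) 3) 17)

theorem G_1_3_18 : Good 11 [18, 3, 1] (List.range' 19 17) :=
  sound 36 11 [18, 3, 1] (updForb 18 [3, 1] (updForb 3 [1] (updForb 1 [] 0))) (List.range' 19 17) (by decide +kernel) (inv_step (inv_step (inv_step inv0 1) 3) 18)

theorem G_1_3_19 : Good 11 [19, 3, 1] (List.range' 20 16) :=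
  sound 36 11 [19, 3, 1] (updForb 19 [3, 1] (updForb 3 [1] (updForb 1 [] 0))) (List.range' 20 16) (by decide +kernel) (inv_step (inv_step (inv_step inv0 1) 3) 19)

theorem G_1_3_20 : Good 11 [20, 3, 1] (List.range' 21 15) :=
  sound 36 11 [20, 3, 1] (updForb 20 [3, 1] (updForb 3 [1] (updForb 1 [] 0))) (List.range' 21 15) (by decide +kernel) (inv_step (inv_step (inv_step inv0 1) 3) 20)

theorem G_1_3_21 : Good 11 [21, 3, 1] (List.range' 22 14) :=
  sound 36 11 [21, 3, 1] (updForb 21 [3, 1] (updForb 3 [1] (updForb 1 [] 0))) (List.range' 22 14) (by decide +kernel) (inv_step (inv_step (inv_step inv0 1) 3) 21)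

theorem G_1_3_22 : Good 11 [22, 3, 1] (List.range' 23 13) :=
  sound 36 11 [22, 3, 1] (updForb 22 [3, 1] (updForb 3 [1] (updForb 1 [] 0))) (List.range' 23 13) (by decide +kernel) (inv_step (inv_step (inv_step inv0 1) 3) 22)

theorem G_1_3_23 : Good 11 [23, 3, 1] (List.range' 24 12) :=
  sound 36 11 [23, 3, 1] (updForb 23 [3, 1] (updForb 3 [1] (updForb 1 [] 0))) (List.range' 24 12) (by decide +kernel) (inv_step (inv_step (inv_step inv0 1) 3) 23)

theorem G_1_3_24 : Good 11 [24, 3, 1] (List.range' 25 11) :=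
  sound 36 11 [24, 3, 1] (updForb 24 [3, 1] (updForb 3 [1] (updForb 1 [] 0))) (List.range' 25 11) (by decide +kernel) (inv_step (inv_step (inv_step inv0 1) 3) 24)

theorem G_1_3_25 : Good 11 [25, 3, 1] (List.range' 26 10) :=
  sound 36 11 [25, 3, 1] (updForb 25 [3, 1] (updForb 3 [1] (updForb 1 [] 0))) (List.range' 26 10) (by decide +kernel) (inv_step (inv_step (inv_step inv0 1) 3) 25)

theorem G_1_3_26 : Good 11 [26, 3, 1] (List.range' 27 9) :=
  sound 36 11 [26, 3, 1] (updForb 26 [3, 1] (updForb 3 [1] (updForb 1 [] 0))) (List.range' 27 9) (by decide +kernel) (inv_step (inv_step (inv_step inv0 1) 3) 26)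

theorem G_1_3_27 : Good 11 [27, 3, 1] (List.range' 28 8) :=
  sound 36 11 [27, 3, 1] (updForb 27 [3, 1] (updForb 3 [1] (updForb 1 [] 0))) (List.range' 28 8) (by decide +kernel) (inv_step (inv_step (inv_step inv0 1) 3) 27)

theorem G_1_3_28 : Good 11 [28, 3, 1] (List.range' 29 7) :=
  sound 36 11 [28, 3, 1] (updForb 28 [3, 1] (updForb 3 [1] (updForb 1 [] 0))) (List.range' 29 7) (by decide +kernel) (inv_step (inv_step (inv_step inv0 1) 3) 28)

theorem G_1_3_29 : Good 11 [29, 3, 1] (List.range' 30 6) :=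
  sound 36 11 [29, 3, 1] (updForb 29 [3, 1] (updForb 3 [1] (updForb 1 [] 0))) (List.range' 30 6) (by decide +kernel) (inv_step (inv_step (inv_step inv0 1) 3) 29)

theorem G_1_3_30 : Good 11 [30, 3, 1] (List.range' 31 5) :=
  sound 36 11 [30, 3, 1] (updForb 30 [3, 1] (updForb 3 [1] (updForb 1 [] 0))) (List.range' 31 5) (by decide +kernel) (inv_step (inv_step (inv_step inv0 1) 3) 30)

theorem G_1_3_31 : Good 11 [31, 3, 1] (List.range' 32 4) :=
  sound 36 11 [31, 3, 1] (updForb 31 [3, 1] (updForb 3 [1] (updForb 1 [] 0))) (List.range' 32 4) (by decide +kernel) (inv_step (inv_step (inv_step inv0 1) 3) 31)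

theorem G_1_3_32 : Good 11 [32, 3, 1] (List.range' 33 3) :=
  sound 36 11 [32, 3, 1] (updForb 32 [3, 1] (updForb 3 [1] (updForb 1 [] 0))) (List.range' 33 3) (by decide +kernel) (inv_step (inv_step (inv_step inv0 1) 3) 32)

theorem G_1_3_33 : Good 11 [33, 3, 1] (List.range' 34 2) :=
  sound 36 11 [33, 3, 1] (updForb 33 [3, 1] (updForb 3 [1] (updForb 1 [] 0))) (List.range' 34 2) (by decide +kernel) (inv_step (inv_step (inv_step inv0 1) 3) 33)

theorem G_1_3_34 : Good 11 [34, 3, 1] (List.range' 35 1) :=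
  sound 36 11 [34, 3, 1] (updForb 34 [3, 1] (updForb 3 [1] (updForb 1 [] 0))) (List.range' 35 1) (by decide +kernel) (inv_step (inv_step (inv_step inv0 1) 3) 34)

theorem G_1_3_35 : Good 11 [35, 3, 1] (List.range' 36 0) :=
  sound 36 11 [35, 3, 1] (updForb 35 [3, 1] (updForb 3 [1] (updForb 1 [] 0))) (List.range' 36 0) (by decide +kernel) (inv_step (inv_step (inv_step inv0 1) 3) 35)

theorem G_1_3 : Good 12 [3, 1] (List.range' 4 32) := by
  refine min_split 4 32 ?_
  intro m hm1 hm2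
  interval_cases m
  · exact G_1_3_4
  · exact good_of_bad 5 [3, 1] (by decide) (by decide)
  · exact G_1_3_6
  · exact G_1_3_7
  · exact G_1_3_8
  · exact G_1_3_9
  · exact G_1_3_10
  · exact G_1_3_11
  · exact G_1_3_12
  · exact G_1_3_13
  · exact G_1_3_14
  · exact G_1_3_15
  · exact G_1_3_16
  · exact G_1_3_17
  · exact G_1_3_18
  · exact G_1_3_19
  · exact G_1_3_20
  · exact G_1_3_21
  · exact G_1_3_22
  · exact G_1_3_23
  · exact G_1_3_24
  · exact G_1_3_25
  · exact G_1_3_26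
  · exact G_1_3_27
  · exact G_1_3_28
  · exact G_1_3_29
  · exact G_1_3_30
  · exact G_1_3_31
  · exact G_1_3_32
  · exact G_1_3_33
  · exact G_1_3_34
  · exact G_1_3_35

theorem G_1_4_5 : Good 11 [5, 4, 1] (List.range' 6 30) :=
  sound 36 11 [5, 4, 1] (updForb 5 [4, 1] (updForb 4 [1] (updForb 1 [] 0))) (List.range' 6 30) (by decide +kernel) (inv_step (inv_step (inv_step inv0 1) 4) 5)

theorem G_1_4_6 : Good 11 [6, 4, 1] (List.range' 7 29) :=
  sound 36 11 [6, 4, 1] (updForb 6 [4, 1] (updForb 4 [1] (updForb 1 [] 0))) (List.range' 7 29) (by decide +kernel) (inv_step (inv_step (inv_step inv0 1) 4) 6)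

theorem G_1_4_8 : Good 11 [8, 4, 1] (List.range' 9 27) :=
  sound 36 11 [8, 4, 1] (updForb 8 [4, 1] (updForb 4 [1] (updForb 1 [] 0))) (List.range' 9 27) (by decide +kernel) (inv_step (inv_step (inv_step inv0 1) 4) 8)

theorem G_1_4_9 : Good 11 [9, 4, 1] (List.range' 10 26) :=
  sound 36 11 [9, 4, 1] (updForb 9 [4, 1] (updForb 4 [1] (updForb 1 [] 0))) (List.range' 10 26) (by decide +kernel) (inv_step (inv_step (inv_step inv0 1) 4) 9)

theorem G_1_4_10 : Good 11 [10, 4, 1] (List.range' 11 25) :=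
  sound 36 11 [10, 4, 1] (updForb 10 [4, 1] (updForb 4 [1] (updForb 1 [] 0))) (List.range' 11 25) (by decide +kernel) (inv_step (inv_step (inv_step inv0 1) 4) 10)

theorem G_1_4_11 : Good 11 [11, 4, 1] (List.range' 12 24) :=
  sound 36 11 [11, 4, 1] (updForb 11 [4, 1] (updForb 4 [1] (updForb 1 [] 0))) (List.range' 12 24) (by decide +kernel) (inv_step (inv_step (inv_step inv0 1) 4) 11)

theorem G_1_4_12 : Good 11 [12, 4, 1] (List.range' 13 23) :=
  sound 36 11 [12, 4, 1] (updForb 12 [4, 1] (updForb 4 [1] (updForb 1 [] 0))) (List.range' 13 23) (by decide +kernel) (inv_step (inv_step (inv_step inv0 1) 4) 12)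

theorem G_1_4_13 : Good 11 [13, 4, 1] (List.range' 14 22) :=
  sound 36 11 [13, 4, 1] (updForb 13 [4, 1] (updForb 4 [1] (updForb 1 [] 0))) (List.range' 14 22) (by decide +kernel) (inv_step (inv_step (inv_step inv0 1) 4) 13)

theorem G_1_4_14 : Good 11 [14, 4, 1] (List.range' 15 21) :=
  sound 36 11 [14, 4, 1] (updForb 14 [4, 1] (updForb 4 [1] (updForb 1 [] 0))) (List.range' 15 21) (by decide +kernel) (inv_step (inv_step (inv_step inv0 1) 4) 14)

theorem G_1_4_15 : Good 11 [15, 4, 1] (List.range' 16 20) :=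
  sound 36 11 [15, 4, 1] (updForb 15 [4, 1] (updForb 4 [1] (updForb 1 [] 0))) (List.range' 16 20) (by decide +kernel) (inv_step (inv_step (inv_step inv0 1) 4) 15)

theorem G_1_4_16 : Good 11 [16, 4, 1] (List.range' 17 19) :=
  sound 36 11 [16, 4, 1] (updForb 16 [4, 1] (updForb 4 [1] (updForb 1 [] 0))) (List.range' 17 19) (by decide +kernel) (inv_step (inv_step (inv_step inv0 1) 4) 16)

theorem G_1_4_17 : Good 11 [17, 4, 1] (List.range' 18 18) :=
  sound 36 11 [17, 4, 1] (updForb 17 [4, 1] (updForb 4 [1] (updForb 1 [] 0))) (List.range' 18 18) (by decide +kernel) (inv_step (inv_step (inv_step inv0 1) 4) 17)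

theorem G_1_4_18 : Good 11 [18, 4, 1] (List.range' 19 17) :=
  sound 36 11 [18, 4, 1] (updForb 18 [4, 1] (updForb 4 [1] (updForb 1 [] 0))) (List.range' 19 17) (by decide +kernel) (inv_step (inv_step (inv_step inv0 1) 4) 18)

theorem G_1_4_19 : Good 11 [19, 4, 1] (List.range' 20 16) :=
  sound 36 11 [19, 4, 1] (updForb 19 [4, 1] (updForb 4 [1] (updForb 1 [] 0))) (List.range' 20 16) (by decide +kernel) (inv_step (inv_step (inv_step inv0 1) 4) 19)

theorem G_1_4_20 : Good 11 [20, 4, 1] (List.range' 21 15) :=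
  sound 36 11 [20, 4, 1] (updForb 20 [4, 1] (updForb 4 [1] (updForb 1 [] 0))) (List.range' 21 15) (by decide +kernel) (inv_step (inv_step (inv_step inv0 1) 4) 20)

theorem G_1_4_21 : Good 11 [21, 4, 1] (List.range' 22 14) :=
  sound 36 11 [21, 4, 1] (updForb 21 [4, 1] (updForb 4 [1] (updForb 1 [] 0))) (List.range' 22 14) (by decide +kernel) (inv_step (inv_step (inv_step inv0 1) 4) 21)

theorem G_1_4_22 : Good 11 [22, 4, 1] (List.range' 23 13) :=
  sound 36 11 [22, 4, 1] (updForb 22 [4, 1] (updForb 4 [1] (updForb 1 [] 0))) (List.range' 23 13) (by decide +kernel) (inv_step (inv_step (inv_step inv0 1) 4) 22)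

theorem G_1_4_23 : Good 11 [23, 4, 1] (List.range' 24 12) :=
  sound 36 11 [23, 4, 1] (updForb 23 [4, 1] (updForb 4 [1] (updForb 1 [] 0))) (List.range' 24 12) (by decide +kernel) (inv_step (inv_step (inv_step inv0 1) 4) 23)

theorem G_1_4_24 : Good 11 [24, 4, 1] (List.range' 25 11) :=
  sound 36 11 [24, 4, 1] (updForb 24 [4, 1] (updForb 4 [1] (updForb 1 [] 0))) (List.range' 25 11) (by decide +kernel) (inv_step (inv_step (inv_step inv0 1) 4) 24)

theorem G_1_4_25 : Good 11 [25, 4, 1] (List.range' 26 10) :=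
  sound 36 11 [25, 4, 1] (updForb 25 [4, 1] (updForb 4 [1] (updForb 1 [] 0))) (List.range' 26 10) (by decide +kernel) (inv_step (inv_step (inv_step inv0 1) 4) 25)

theorem G_1_4_26 : Good 11 [26, 4, 1] (List.range' 27 9) :=
  sound 36 11 [26, 4, 1] (updForb 26 [4, 1] (updForb 4 [1] (updForb 1 [] 0))) (List.range' 27 9) (by decide +kernel) (inv_step (inv_step (inv_step inv0 1) 4) 26)

theorem G_1_4_27 : Good 11 [27, 4, 1] (List.range' 28 8) :=
  sound 36 11 [27, 4, 1] (updForb 27 [4, 1] (updForb 4 [1] (updForb 1 [] 0))) (List.range' 28 8) (by decide +kernel) (inv_step (inv_step (inv_step inv0 1) 4) 27)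

theorem G_1_4_28 : Good 11 [28, 4, 1] (List.range' 29 7) :=
  sound 36 11 [28, 4, 1] (updForb 28 [4, 1] (updForb 4 [1] (updForb 1 [] 0))) (List.range' 29 7) (by decide +kernel) (inv_step (inv_step (inv_step inv0 1) 4) 28)

theorem G_1_4_29 : Good 11 [29, 4, 1] (List.range' 30 6) :=
  sound 36 11 [29, 4, 1] (updForb 29 [4, 1] (updForb 4 [1] (updForb 1 [] 0))) (List.range' 30 6) (by decide +kernel) (inv_step (inv_step (inv_step inv0 1) 4) 29)

theorem G_1_4_30 : Good 11 [30, 4, 1] (List.range' 31 5) :=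
  sound 36 11 [30, 4, 1] (updForb 30 [4, 1] (updForb 4 [1] (updForb 1 [] 0))) (List.range' 31 5) (by decide +kernel) (inv_step (inv_step (inv_step inv0 1) 4) 30)

theorem G_1_4_31 : Good 11 [31, 4, 1] (List.range' 32 4) :=
  sound 36 11 [31, 4, 1] (updForb 31 [4, 1] (updForb 4 [1] (updForb 1 [] 0))) (List.range' 32 4) (by decide +kernel) (inv_step (inv_step (inv_step inv0 1) 4) 31)

theorem G_1_4_32 : Good 11 [32, 4, 1] (List.range' 33 3) :=
  sound 36 11 [32, 4, 1] (updForb 32 [4, 1] (updForb 4 [1] (updForb 1 [] 0))) (List.range' 33 3) (by decide +kernel) (inv_step (inv_step (inv_step inv0 1) 4) 32)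

theorem G_1_4_33 : Good 11 [33, 4, 1] (List.range' 34 2) :=
  sound 36 11 [33, 4, 1] (updForb 33 [4, 1] (updForb 4 [1] (updForb 1 [] 0))) (List.range' 34 2) (by decide +kernel) (inv_step (inv_step (inv_step inv0 1) 4) 33)

theorem G_1_4_34 : Good 11 [34, 4, 1] (List.range' 35 1) :=
  sound 36 11 [34, 4, 1] (updForb 34 [4, 1] (updForb 4 [1] (updForb 1 [] 0))) (List.range' 35 1) (by decide +kernel) (inv_step (inv_step (inv_step inv0 1) 4) 34)

theorem G_1_4_35 : Good 11 [35, 4, 1] (List.range' 36 0) :=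
  sound 36 11 [35, 4, 1] (updForb 35 [4, 1] (updForb 4 [1] (updForb 1 [] 0))) (List.range' 36 0) (by decide +kernel) (inv_step (inv_step (inv_step inv0 1) 4) 35)

theorem G_1_4 : Good 12 [4, 1] (List.range' 5 31) := by
  refine min_split 5 31 ?_
  intro m hm1 hm2
  interval_cases m
  · exact G_1_4_5
  · exact G_1_4_6
  · exact good_of_bad 7 [4, 1] (by decide) (by decide)
  · exact G_1_4_8
  · exact G_1_4_9
  · exact G_1_4_10
  · exact G_1_4_11
  · exact G_1_4_12
  · exact G_1_4_13
  · exact G_1_4_14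
  · exact G_1_4_15
  · exact G_1_4_16
  · exact G_1_4_17
  · exact G_1_4_18
  · exact G_1_4_19
  · exact G_1_4_20
  · exact G_1_4_21
  · exact G_1_4_22
  · exact G_1_4_23
  · exact G_1_4_24
  · exact G_1_4_25
  · exact G_1_4_26
  · exact G_1_4_27
  · exact G_1_4_28
  · exact G_1_4_29
  · exact G_1_4_30
  · exact G_1_4_31
  · exact G_1_4_32
  · exact G_1_4_33
  · exact G_1_4_34
  · exact G_1_4_35

theorem G_1_5_6 : Good 11 [6, 5, 1] (List.range' 7 29) :=
  sound 36 11 [6, 5, 1] (updForb 6 [5, 1] (updForb 5 [1] (updForb 1 [] 0))) (List.range' 7 29) (by decide +kernel) (inv_step (inv_step (inv_step inv0 1) 5) 6)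

theorem G_1_5_7 : Good 11 [7, 5, 1] (List.range' 8 28) :=
  sound 36 11 [7, 5, 1] (updForb 7 [5, 1] (updForb 5 [1] (updForb 1 [] 0))) (List.range' 8 28) (by decide +kernel) (inv_step (inv_step (inv_step inv0 1) 5) 7)

theorem G_1_5_8 : Good 11 [8, 5, 1] (List.range' 9 27) :=
  sound 36 11 [8, 5, 1] (updForb 8 [5, 1] (updForb 5 [1] (updForb 1 [] 0))) (List.range' 9 27) (by decide +kernel) (inv_step (inv_step (inv_step inv0 1) 5) 8)

theorem G_1_5_10 : Good 11 [10, 5, 1] (List.range' 11 25) :=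
  sound 36 11 [10, 5, 1] (updForb 10 [5, 1] (updForb 5 [1] (updForb 1 [] 0))) (List.range' 11 25) (by decide +kernel) (inv_step (inv_step (inv_step inv0 1) 5) 10)

theorem G_1_5_11 : Good 11 [11, 5, 1] (List.range' 12 24) :=
  sound 36 11 [11, 5, 1] (updForb 11 [5, 1] (updForb 5 [1] (updForb 1 [] 0))) (List.range' 12 24) (by decide +kernel) (inv_step (inv_step (inv_step inv0 1) 5) 11)

theorem G_1_5_12 : Good 11 [12, 5, 1] (List.range' 13 23) :=
  sound 36 11 [12, 5, 1] (updForb 12 [5, 1] (updForb 5 [1] (updForb 1 [] 0))) (List.range' 13 23) (by decide +kernel) (inv_step (inv_step (inv_step inv0 1) 5) 12)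

theorem G_1_5_13 : Good 11 [13, 5, 1] (List.range' 14 22) :=
  sound 36 11 [13, 5, 1] (updForb 13 [5, 1] (updForb 5 [1] (updForb 1 [] 0))) (List.range' 14 22) (by decide +kernel) (inv_step (inv_step (inv_step inv0 1) 5) 13)

theorem G_1_5_14 : Good 11 [14, 5, 1] (List.range' 15 21) :=
  sound 36 11 [14, 5, 1] (updForb 14 [5, 1] (updForb 5 [1] (updForb 1 [] 0))) (List.range' 15 21) (by decide +kernel) (inv_step (inv_step (inv_step inv0 1) 5) 14)

theorem G_1_5_15 : Good 11 [15, 5, 1] (List.range' 16 20) :=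
  sound 36 11 [15, 5, 1] (updForb 15 [5, 1] (updForb 5 [1] (updForb 1 [] 0))) (List.range' 16 20) (by decide +kernel) (inv_step (inv_step (inv_step inv0 1) 5) 15)

theorem G_1_5_16 : Good 11 [16, 5, 1] (List.range' 17 19) :=
  sound 36 11 [16, 5, 1] (updForb 16 [5, 1] (updForb 5 [1] (updForb 1 [] 0))) (List.range' 17 19) (by decide +kernel) (inv_step (inv_step (inv_step inv0 1) 5) 16)

theorem G_1_5_17 : Good 11 [17, 5, 1] (List.range' 18 18) :=
  sound 36 11 [17, 5, 1] (updForb 17 [5, 1] (updForb 5 [1] (updForb 1 [] 0))) (List.range' 18 18) (by decide +kernel) (inv_step (inv_step (inv_step inv0 1) 5) 17)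

theorem G_1_5_18 : Good 11 [18, 5, 1] (List.range' 19 17) :=
  sound 36 11 [18, 5, 1] (updForb 18 [5, 1] (updForb 5 [1] (updForb 1 [] 0))) (List.range' 19 17) (by decide +kernel) (inv_step (inv_step (inv_step inv0 1) 5) 18)

theorem G_1_5_19 : Good 11 [19, 5, 1] (List.range' 20 16) :=
  sound 36 11 [19, 5, 1] (updForb 19 [5, 1] (updForb 5 [1] (updForb 1 [] 0))) (List.range' 20 16) (by decide +kernel) (inv_step (inv_step (inv_step inv0 1) 5) 19)

theorem G_1_5_20 : Good 11 [20, 5, 1] (List.range' 21 15) :=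
  sound 36 11 [20, 5, 1] (updForb 20 [5, 1] (updForb 5 [1] (updForb 1 [] 0))) (List.range' 21 15) (by decide +kernel) (inv_step (inv_step (inv_step inv0 1) 5) 20)

theorem G_1_5_21 : Good 11 [21, 5, 1] (List.range' 22 14) :=
  sound 36 11 [21, 5, 1] (updForb 21 [5, 1] (updForb 5 [1] (updForb 1 [] 0))) (List.range' 22 14) (by decide +kernel) (inv_step (inv_step (inv_step inv0 1) 5) 21)

theorem G_1_5_22 : Good 11 [22, 5, 1] (List.range' 23 13) :=
  sound 36 11 [22, 5, 1] (updForb 22 [5, 1] (updForb 5 [1] (updForb 1 [] 0))) (List.range' 23 13) (by decide +kernel) (inv_step (inv_step (inv_step inv0 1) 5) 22)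

theorem G_1_5_23 : Good 11 [23, 5, 1] (List.range' 24 12) :=
  sound 36 11 [23, 5, 1] (updForb 23 [5, 1] (updForb 5 [1] (updForb 1 [] 0))) (List.range' 24 12) (by decide +kernel) (inv_step (inv_step (inv_step inv0 1) 5) 23)

theorem G_1_5_24 : Good 11 [24, 5, 1] (List.range' 25 11) :=
  sound 36 11 [24, 5, 1] (updForb 24 [5, 1] (updForb 5 [1] (updForb 1 [] 0))) (List.range' 25 11) (by decide +kernel) (inv_step (inv_step (inv_step inv0 1) 5) 24)

theorem G_1_5_25 : Good 11 [25, 5, 1] (List.range' 26 10) :=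
  sound 36 11 [25, 5, 1] (updForb 25 [5, 1] (updForb 5 [1] (updForb 1 [] 0))) (List.range' 26 10) (by decide +kernel) (inv_step (inv_step (inv_step inv0 1) 5) 25)

theorem G_1_5_26 : Good 11 [26, 5, 1] (List.range' 27 9) :=
  sound 36 11 [26, 5, 1] (updForb 26 [5, 1] (updForb 5 [1] (updForb 1 [] 0))) (List.range' 27 9) (by decide +kernel) (inv_step (inv_step (inv_step inv0 1) 5) 26)

theorem G_1_5_27 : Good 11 [27, 5, 1] (List.range' 28 8) :=
  sound 36 11 [27, 5, 1] (updForb 27 [5, 1] (updForb 5 [1] (updForb 1 [] 0))) (List.range' 28 8) (by decide +kernel) (inv_step (inv_step (inv_step inv0 1) 5) 27)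

theorem G_1_5_28 : Good 11 [28, 5, 1] (List.range' 29 7) :=
  sound 36 11 [28, 5, 1] (updForb 28 [5, 1] (updForb 5 [1] (updForb 1 [] 0))) (List.range' 29 7) (by decide +kernel) (inv_step (inv_step (inv_step inv0 1) 5) 28)

theorem G_1_5_29 : Good 11 [29, 5, 1] (List.range' 30 6) :=
  sound 36 11 [29, 5, 1] (updForb 29 [5, 1] (updForb 5 [1] (updForb 1 [] 0))) (List.range' 30 6) (by decide +kernel) (inv_step (inv_step (inv_step inv0 1) 5) 29)

theorem G_1_5_30 : Good 11 [30, 5, 1] (List.range' 31 5) :=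
  sound 36 11 [30, 5, 1] (updForb 30 [5, 1] (updForb 5 [1] (updForb 1 [] 0))) (List.range' 31 5) (by decide +kernel) (inv_step (inv_step (inv_step inv0 1) 5) 30)

theorem G_1_5_31 : Good 11 [31, 5, 1] (List.range' 32 4) :=
  sound 36 11 [31, 5, 1] (updForb 31 [5, 1] (updForb 5 [1] (updForb 1 [] 0))) (List.range' 32 4) (by decide +kernel) (inv_step (inv_step (inv_step inv0 1) 5) 31)

theorem G_1_5_32 : Good 11 [32, 5, 1] (List.range' 33 3) :=
  sound 36 11 [32, 5, 1] (updForb 32 [5, 1] (updForb 5 [1] (updForb 1 [] 0))) (List.range' 33 3) (by decide +kernel) (inv_step (inv_step (inv_step inv0 1) 5) 32)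

theorem G_1_5_33 : Good 11 [33, 5, 1] (List.range' 34 2) :=
  sound 36 11 [33, 5, 1] (updForb 33 [5, 1] (updForb 5 [1] (updForb 1 [] 0))) (List.range' 34 2) (by decide +kernel) (inv_step (inv_step (inv_step inv0 1) 5) 33)

theorem G_1_5_34 : Good 11 [34, 5, 1] (List.range' 35 1) :=
  sound 36 11 [34, 5, 1] (updForb 34 [5, 1] (updForb 5 [1] (updForb 1 [] 0))) (List.range' 35 1) (by decide +kernel) (inv_step (inv_step (inv_step inv0 1) 5) 34)

theorem G_1_5_35 : Good 11 [35, 5, 1] (List.range' 36 0) :=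
  sound 36 11 [35, 5, 1] (updForb 35 [5, 1] (updForb 5 [1] (updForb 1 [] 0))) (List.range' 36 0) (by decide +kernel) (inv_step (inv_step (inv_step inv0 1) 5) 35)

theorem G_1_5 : Good 12 [5, 1] (List.range' 6 30) := by
  refine min_split 6 30 ?_
  intro m hm1 hm2
  interval_cases m
  · exact G_1_5_6
  · exact G_1_5_7
  · exact G_1_5_8
  · exact good_of_bad 9 [5, 1] (by decide) (by decide)
  · exact G_1_5_10
  · exact G_1_5_11
  · exact G_1_5_12
  · exact G_1_5_13
  · exact G_1_5_14
  · exact G_1_5_15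
  · exact G_1_5_16
  · exact G_1_5_17
  · exact G_1_5_18
  · exact G_1_5_19
  · exact G_1_5_20
  · exact G_1_5_21
  · exact G_1_5_22
  · exact G_1_5_23
  · exact G_1_5_24
  · exact G_1_5_25
  · exact G_1_5_26
  · exact G_1_5_27
  · exact G_1_5_28
  · exact G_1_5_29
  · exact G_1_5_30
  · exact G_1_5_31
  · exact G_1_5_32
  · exact G_1_5_33
  · exact G_1_5_34
  · exact G_1_5_35

theorem G_1_6 : Good 12 [6, 1] (List.range' 7 29) :=
  sound 36 12 [6, 1] (updForb 6 [1] (updForb 1 [] 0)) (List.range' 7 29) (by decide +kernel) (inv_step (inv_step inv0 1) 6)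

theorem G_1_7 : Good 12 [7, 1] (List.range' 8 28) :=
  sound 36 12 [7, 1] (updForb 7 [1] (updForb 1 [] 0)) (List.range' 8 28) (by decide +kernel) (inv_step (inv_step inv0 1) 7)

theorem G_1_8 : Good 12 [8, 1] (List.range' 9 27) :=
  sound 36 12 [8, 1] (updForb 8 [1] (updForb 1 [] 0)) (List.range' 9 27) (by decide +kernel) (inv_step (inv_step inv0 1) 8)

theorem G_1_9 : Good 12 [9, 1] (List.range' 10 26) :=
  sound 36 12 [9, 1] (updForb 9 [1] (updForb 1 [] 0)) (List.range' 10 26) (by decide +kernel) (inv_step (inv_step inv0 1) 9)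

theorem G_1_10 : Good 12 [10, 1] (List.range' 11 25) :=
  sound 36 12 [10, 1] (updForb 10 [1] (updForb 1 [] 0)) (List.range' 11 25) (by decide +kernel) (inv_step (inv_step inv0 1) 10)

theorem G_1_11 : Good 12 [11, 1] (List.range' 12 24) :=
  sound 36 12 [11, 1] (updForb 11 [1] (updForb 1 [] 0)) (List.range' 12 24) (by decide +kernel) (inv_step (inv_step inv0 1) 11)

theorem G_1_12 : Good 12 [12, 1] (List.range' 13 23) :=
  sound 36 12 [12, 1] (updForb 12 [1] (updForb 1 [] 0)) (List.range' 13 23) (by decide +kernel) (inv_step (inv_step inv0 1) 12)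

theorem G_1_13 : Good 12 [13, 1] (List.range' 14 22) :=
  sound 36 12 [13, 1] (updForb 13 [1] (updForb 1 [] 0)) (List.range' 14 22) (by decide +kernel) (inv_step (inv_step inv0 1) 13)

theorem G_1_14 : Good 12 [14, 1] (List.range' 15 21) :=
  sound 36 12 [14, 1] (updForb 14 [1] (updForb 1 [] 0)) (List.range' 15 21) (by decide +kernel) (inv_step (inv_step inv0 1) 14)

theorem G_1_15 : Good 12 [15, 1] (List.range' 16 20) :=
  sound 36 12 [15, 1] (updForb 15 [1] (updForb 1 [] 0)) (List.range' 16 20) (by decide +kernel) (inv_step (inv_step inv0 1) 15)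

theorem G_1_16 : Good 12 [16, 1] (List.range' 17 19) :=
  sound 36 12 [16, 1] (updForb 16 [1] (updForb 1 [] 0)) (List.range' 17 19) (by decide +kernel) (inv_step (inv_step inv0 1) 16)

theorem G_1_17 : Good 12 [17, 1] (List.range' 18 18) :=
  sound 36 12 [17, 1] (updForb 17 [1] (updForb 1 [] 0)) (List.range' 18 18) (by decide +kernel) (inv_step (inv_step inv0 1) 17)

theorem G_1_18 : Good 12 [18, 1] (List.range' 19 17) :=
  sound 36 12 [18, 1] (updForb 18 [1] (updForb 1 [] 0)) (List.range' 19 17) (by decide +kernel) (inv_step (inv_step inv0 1) 18)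

theorem G_1_19 : Good 12 [19, 1] (List.range' 20 16) :=
  sound 36 12 [19, 1] (updForb 19 [1] (updForb 1 [] 0)) (List.range' 20 16) (by decide +kernel) (inv_step (inv_step inv0 1) 19)

theorem G_1_20 : Good 12 [20, 1] (List.range' 21 15) :=
  sound 36 12 [20, 1] (updForb 20 [1] (updForb 1 [] 0)) (List.range' 21 15) (by decide +kernel) (inv_step (inv_step inv0 1) 20)

theorem G_1_21 : Good 12 [21, 1] (List.range' 22 14) :=
  sound 36 12 [21, 1] (updForb 21 [1] (updForb 1 [] 0)) (List.range' 22 14) (by decide +kernel) (inv_step (inv_step inv0 1) 21)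

theorem G_1_22 : Good 12 [22, 1] (List.range' 23 13) :=
  sound 36 12 [22, 1] (updForb 22 [1] (updForb 1 [] 0)) (List.range' 23 13) (by decide +kernel) (inv_step (inv_step inv0 1) 22)

theorem G_1_23 : Good 12 [23, 1] (List.range' 24 12) :=
  sound 36 12 [23, 1] (updForb 23 [1] (updForb 1 [] 0)) (List.range' 24 12) (by decide +kernel) (inv_step (inv_step inv0 1) 23)

theorem G_1_24 : Good 12 [24, 1] (List.range' 25 11) :=
  sound 36 12 [24, 1] (updForb 24 [1] (updForb 1 [] 0)) (List.range' 25 11) (by decide +kernel) (inv_step (inv_step inv0 1) 24)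

theorem G_1_25 : Good 12 [25, 1] (List.range' 26 10) :=
  sound 36 12 [25, 1] (updForb 25 [1] (updForb 1 [] 0)) (List.range' 26 10) (by decide +kernel) (inv_step (inv_step inv0 1) 25)

theorem G_1_26 : Good 12 [26, 1] (List.range' 27 9) :=
  sound 36 12 [26, 1] (updForb 26 [1] (updForb 1 [] 0)) (List.range' 27 9) (by decide +kernel) (inv_step (inv_step inv0 1) 26)

theorem G_1_27 : Good 12 [27, 1] (List.range' 28 8) :=
  sound 36 12 [27, 1] (updForb 27 [1] (updForb 1 [] 0)) (List.range' 28 8) (by decide +kernel) (inv_step (inv_step inv0 1) 27)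

theorem G_1_28 : Good 12 [28, 1] (List.range' 29 7) :=
  sound 36 12 [28, 1] (updForb 28 [1] (updForb 1 [] 0)) (List.range' 29 7) (by decide +kernel) (inv_step (inv_step inv0 1) 28)

theorem G_1_29 : Good 12 [29, 1] (List.range' 30 6) :=
  sound 36 12 [29, 1] (updForb 29 [1] (updForb 1 [] 0)) (List.range' 30 6) (by decide +kernel) (inv_step (inv_step inv0 1) 29)

theorem G_1_30 : Good 12 [30, 1] (List.range' 31 5) :=
  sound 36 12 [30, 1] (updForb 30 [1] (updForb 1 [] 0)) (List.range' 31 5) (by decide +kernel) (inv_step (inv_step inv0 1) 30)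

theorem G_1_31 : Good 12 [31, 1] (List.range' 32 4) :=
  sound 36 12 [31, 1] (updForb 31 [1] (updForb 1 [] 0)) (List.range' 32 4) (by decide +kernel) (inv_step (inv_step inv0 1) 31)

theorem G_1_32 : Good 12 [32, 1] (List.range' 33 3) :=
  sound 36 12 [32, 1] (updForb 32 [1] (updForb 1 [] 0)) (List.range' 33 3) (by decide +kernel) (inv_step (inv_step inv0 1) 32)

theorem G_1_33 : Good 12 [33, 1] (List.range' 34 2) :=
  sound 36 12 [33, 1] (updForb 33 [1] (updForb 1 [] 0)) (List.range' 34 2) (by decide +kernel) (inv_step (inv_step inv0 1) 33)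

theorem G_1_34 : Good 12 [34, 1] (List.range' 35 1) :=
  sound 36 12 [34, 1] (updForb 34 [1] (updForb 1 [] 0)) (List.range' 35 1) (by decide +kernel) (inv_step (inv_step inv0 1) 34)

theorem G_1_35 : Good 12 [35, 1] (List.range' 36 0) :=
  sound 36 12 [35, 1] (updForb 35 [1] (updForb 1 [] 0)) (List.range' 36 0) (by decide +kernel) (inv_step (inv_step inv0 1) 35)

theorem G_1 : Good 13 [1] (List.range' 2 34) := by
  refine min_split 2 34 ?_
  intro m hm1 hm2
  interval_cases m
  · exact G_1_2
  · exact G_1_3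
  · exact G_1_4
  · exact G_1_5
  · exact G_1_6
  · exact G_1_7
  · exact G_1_8
  · exact G_1_9
  · exact G_1_10
  · exact G_1_11
  · exact G_1_12
  · exact G_1_13
  · exact G_1_14
  · exact G_1_15
  · exact G_1_16
  · exact G_1_17
  · exact G_1_18
  · exact G_1_19
  · exact G_1_20
  · exact G_1_21
  · exact G_1_22
  · exact G_1_23
  · exact G_1_24
  · exact G_1_25
  · exact G_1_26
  · exact G_1_27
  · exact G_1_28
  · exact G_1_29
  · exact G_1_30
  · exact G_1_31
  · exact G_1_32
  · exact G_1_33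
  · exact G_1_34
  · exact G_1_35

lemma card_le_13 (T : Finset ℕ) (hsub : ∀ y ∈ T, 1 ≤ y ∧ y ≤ 35) (hAPF : APF T) :
    T.card ≤ 13 := by
  rcases T.eq_empty_or_nonempty with rfl | hT
  · simp
  set m := T.min' hT with hm
  have hmT : m ∈ T := T.min'_mem hT
  have hm1 : 1 ≤ m := (hsub m hmT).1
  set f : ℕ → ℕ := fun y => y - (m - 1) with hf
  set U := T.image f with hU
  have hinj : Set.InjOn f T := by
    intro a ha b hb hab
    have h1 := T.min'_le a ha
    have h2 := T.min'_le b hb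
    simp only [hf] at hab
    omega
  have hcardU : U.card = T.card := Finset.card_image_of_injOn hinj
  have h1U : 1 ∈ U := by
    refine Finset.mem_image.mpr ⟨m, hmT, ?_⟩
    simp only [hf]
    omega
  have hUsub : ∀ y ∈ U, 1 ≤ y ∧ y ≤ 35 := by
    intro y hy
    obtain ⟨a, ha, rfl⟩ := Finset.mem_image.mp hy
    have h1 := T.min'_le a ha
    have h2 := hsub a ha
    simp only [hf]
    omega
  have hAPFU : APF U := by
    intro a ha b hb c hc h1 h2 h3 heq
    obtain ⟨a', ha', rfl⟩ := Finset.mem_image.mp ha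
    obtain ⟨b', hb', rfl⟩ := Finset.mem_image.mp hb
    obtain ⟨c', hc', rfl⟩ := Finset.mem_image.mp hc
    have hma := T.min'_le a' ha'
    have hmb := T.min'_le b' hb'
    have hmc := T.min'_le c' hc'
    have heq' : a' + c' = 2 * b' := by
      simp only [hf] at heq
      omega
    exact hAPF a' ha' b' hb' c' hc' (fun h => h1 (by rw [h])) (fun h => h2 (by rw [h]))
      (fun h => h3 (by rw [h])) heq'
  have hcard : (U.erase 1).card < 13 := by
    refine G_1 (U.erase 1) ?_ ?_ ?_
    · intro y hy
      have hyU := Finset.mem_of_mem_erase hy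
      have h1 := hUsub y hyU
      have hy1 := Finset.ne_of_mem_erase hy
      rw [mem_range'_iff]
      omega
    · intro y hy h
      have : y = 1 := by simpa using h
      exact Finset.ne_of_mem_erase hy this
    · refine apf_mono ?_ hAPFU
      intro y hy
      simp only [Finset.mem_union, Finset.mem_erase, List.toFinset_cons,
        List.toFinset_nil, LawfulSingleton.insert_empty_eq, Finset.mem_singleton] at hy
      rcases hy with ⟨_, hy⟩ | rfl
      · exact hy
      · exact h1U
  have := Finset.card_erase_add_one h1U
  omega

lemma noSmall (l : ℕ) (hl : l ≤ 35) (g : Fin 14 → ℕ)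
    (hg : IsGracefulLColoring (⊤ : SimpleGraph (Fin 14)) l g) : False := by
  obtain ⟨hmem, hproper, hedge⟩ := hg
  have hinj : Function.Injective g := by
    intro a b hab
    by_contra hne
    exact hproper a b ((SimpleGraph.top_adj a b).mpr hne) hab
  set T := Finset.image g Finset.univ with hT
  have hcard : T.card = 14 := by
    rw [hT, Finset.card_image_of_injective _ hinj]
    simp
  have hsub : ∀ y ∈ T, 1 ≤ y ∧ y ≤ 35 := by
    intro y hy
    obtain ⟨v, -, rfl⟩ := Finset.mem_image.mp hy
    have := hmem v
    rw [Finset.mem_Icc] at this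
    omega
  have hAPF : APF T := by
    intro a ha b hb c hc h1 h2 h3 heq
    obtain ⟨u, -, rfl⟩ := Finset.mem_image.mp ha
    obtain ⟨v, -, rfl⟩ := Finset.mem_image.mp hb
    obtain ⟨w, -, rfl⟩ := Finset.mem_image.mp hc
    have hvu : v ≠ u := fun h => h1 (by rw [h])
    have hvw : v ≠ w := fun h => h2 (by rw [h])
    have huw : u ≠ w := fun h => h3 (by rw [h])
    have hd := hedge v u w ((SimpleGraph.top_adj v u).mpr hvu)
      ((SimpleGraph.top_adj v w).mpr hvw) huw
    apply hd
    unfold Nat.dist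
    omega
  have := card_le_13 T hsub hAPF
  omega

theorem gracefulChromatic_K14 :
    gracefulChromaticNumber (⊤ : SimpleGraph (Fin 14)) = 36 ∧
      IsGracefulLColoring (⊤ : SimpleGraph (Fin 14)) 36 ![1, 2, 4, 8, 9, 13, 21, 23, 26, 27, 30, 32, 35, 36] := by
  have hcol : IsGracefulLColoring (⊤ : SimpleGraph (Fin 14)) 36
      ![1, 2, 4, 8, 9, 13, 21, 23, 26, 27, 30, 32, 35, 36] := by
    refine ⟨by decide, ?_, ?_⟩
    · intro a b hab
      exact (by decide : ∀ a b : Fin 14, a ≠ b →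
          (![1, 2, 4, 8, 9, 13, 21, 23, 26, 27, 30, 32, 35, 36] : Fin 14 → ℕ) a ≠
          ![1, 2, 4, 8, 9, 13, 21, 23, 26, 27, 30, 32, 35, 36] b) a b
        ((SimpleGraph.top_adj a b).mp hab)
    · intro a b c hab hac hbc
      exact (by decide : ∀ a b c : Fin 14, a ≠ b → a ≠ c → b ≠ c →
          Nat.dist ((![1, 2, 4, 8, 9, 13, 21, 23, 26, 27, 30, 32, 35, 36] : Fin 14 → ℕ) a)
              (![1, 2, 4, 8, 9, 13, 21, 23, 26, 27, 30, 32, 35, 36] b) ≠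
          Nat.dist ((![1, 2, 4, 8, 9, 13, 21, 23, 26, 27, 30, 32, 35, 36] : Fin 14 → ℕ) a)
              (![1, 2, 4, 8, 9, 13, 21, 23, 26, 27, 30, 32, 35, 36] c)) a b c
        ((SimpleGraph.top_adj a b).mp hab) ((SimpleGraph.top_adj a c).mp hac) hbc
  refine ⟨?_, hcol⟩
  have h36 : 36 ∈ {l | 2 ≤ l ∧ ∃ g : Fin 14 → ℕ,
      IsGracefulLColoring (⊤ : SimpleGraph (Fin 14)) l g} :=
    ⟨by norm_num, ![1, 2, 4, 8, 9, 13, 21, 23, 26, 27, 30, 32, 35, 36], hcol⟩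
  unfold gracefulChromaticNumber
  refine le_antisymm (Nat.sInf_le h36) ?_
  by_contra hlt
  push_neg at hlt
  obtain ⟨h2, g, hg⟩ := Nat.sInf_mem (⟨36, h36⟩ : Set.Nonempty _)
  exact noSmall _ (by omega) g hg
end
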